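/- arXiv:1112.0118 — 4 statements merged into one kernel-verified Lean document; each statement's English description precedes it below -/
import Mathlib

section
/- For every v ∈ 𝔡_ξ, every w ∈ 𝔡 and every integer M ≥ 1, one has A_v(M) · A_w(M) = A_{ρ(v,w)}(M). -/
open scoped BigOperators

noncomputable section

attribute [local instance 10] Classical.propDecidable

/-- The `q`-integer `[n] = (1 - q^n)/(1 - q)`. -/
def qint (q : ℝ) (n : ℕ) : ℝ := (1 - q ^ n) / (1 - q)

/-- `I(r,n)`: multi-indices of positive integers of depth `r` and weight `n`. -/
def Ifin (r n : ℕ) : Finset (Fin r → ℕ) :=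
  (Fintype.piFinset fun _ : Fin r => Finset.Icc 1 n).filter fun c => (∑ i, c i) = n

/-- `I₀(r,n)`: admissible multi-indices (first entry at least 2). -/
def I0fin (r n : ℕ) : Finset (Fin r → ℕ) :=
  (Ifin r n).filter fun c => ∀ h : 0 < r, 2 ≤ c ⟨0, h⟩

/-- The `q`-analogue of the multiple zeta value,
`ζ_q(α) = Σ_{m_1 > ... > m_r > 0} Π_j q^{(α_j - 1) m_j}/[m_j]^{α_j}`. -/
def zetaQ (q : ℝ) {r : ℕ} (α : Fin r → ℕ) : ℝ :=
  ∑' m : {m : Fin r → ℕ // (∀ i j : Fin r, i < j → m j < m i) ∧ ∀ i, 0 < m i},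
    ∏ j, q ^ ((α j - 1) * m.1 j) / qint q (m.1 j) ^ α j

/-- `K_{b,n}(M) = Σ_{α ∈ I₀(b,n)} Σ_{m_1 > ... > m_{b-1} > m_b = M} Π_j q^{(α_j-1)m_j}/[m_j]^{α_j}`. -/
def Kfun (q : ℝ) (b n M : ℕ) : ℝ :=
  ∑ α ∈ I0fin b n,
    ∑' m : {m : Fin b → ℕ //
        (∀ i j : Fin b, i < j → m j < m i) ∧
          ∀ h : 0 < b, m ⟨b - 1, Nat.sub_lt h Nat.one_pos⟩ = M},
      ∏ j, q ^ ((α j - 1) * m.1 j) / qint q (m.1 j) ^ α j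

/-- `f_ℓ(N,M) = Σ_{N = k_1 > k_2 > ... > k_ℓ > M} (q^{k_1-M}/[k_1-M]) Π_{j=2}^{ℓ} 1/[k_j-M]`. -/
def fS (q : ℝ) (l N M : ℕ) : ℝ :=
  ∑ k ∈ (Fintype.piFinset fun _ : Fin l => Finset.Ioc M N).filter
      (fun k => (∀ i j : Fin l, i < j → k j < k i) ∧ ∀ h : 0 < l, k ⟨0, h⟩ = N),
    ∏ j : Fin l, (if (j : ℕ) = 0 then q ^ (k j - M) else 1) / qint q (k j - M)

/-- `g_{ℓ,β}(M) = Σ_{M = m_1 ≥ m_2 ≥ ... ≥ m_ℓ ≥ 1} (q^{(β-1)m_1}/[m_1]^β) Π_{j=2}^{ℓ} q^{m_j}/[m_j]`. -/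
def gS (q : ℝ) (l β M : ℕ) : ℝ :=
  ∑ m ∈ (Fintype.piFinset fun _ : Fin l => Finset.Icc 1 M).filter
      (fun m => (∀ i j : Fin l, i ≤ j → m j ≤ m i) ∧ ∀ h : 0 < l, m ⟨0, h⟩ = M),
    ∏ j : Fin l, if (j : ℕ) = 0 then q ^ ((β - 1) * m j) / qint q (m j) ^ β
      else q ^ m j / qint q (m j)

/-- `h_{r,ℓ}(N_1,...,N_r,M) = Σ_{c ∈ I(r,ℓ)} (Π_{j=1}^{r-1} f_{c_j}(N_j,N_{j+1})) f_{c_r}(N_r,M)`. -/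
def hS (q : ℝ) (r l : ℕ) (N : Fin r → ℕ) (M : ℕ) : ℝ :=
  ∑ c ∈ Ifin r l,
    ∏ j : Fin r, fS q (c j) (N j) (if h : (j : ℕ) + 1 < r then N ⟨(j : ℕ) + 1, h⟩ else M)

/-- `p(n_1,...,n_s;m) = (q^{n_1-m}/[n_1-m]) Π_{j=2}^{s} 1/[n_j-m]`, with `p(∅;m) = 1`. -/
def pS (q : ℝ) {s : ℕ} (n : Fin s → ℕ) (m : ℕ) : ℝ :=
  ∏ j : Fin s, (if (j : ℕ) = 0 then q ^ (n j - m) else 1) / qint q (n j - m)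

/-! ### The algebras 𝔡, 𝔡_ξ and 𝔡₁ -/

/-- The alphabet `S = {z_k}_{k ≥ 1} ∪ {ξ_k}_{k ≥ 1}`: `Sum.inl k = z_k`, `Sum.inr k = ξ_k`. -/
abbrev Letter : Type := ℕ+ ⊕ ℕ+

/-- The noncommutative polynomial algebra 𝔡 over ℤ freely generated by `S`. -/
abbrev Dfree : Type := MonoidAlgebra ℤ (FreeMonoid Letter)

/-- The subalgebra 𝔡_ξ generated by the `ξ_k`, realized as a free algebra on `{ξ_k}_{k≥1}`. -/
abbrev DXi : Type := MonoidAlgebra ℤ (FreeMonoid ℕ+)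

/-- The subalgebra 𝔡₁ generated by `z_1` and `ξ_1`, realized as a free algebra on two letters
(`false = z_1`, `true = ξ_1`). -/
abbrev DOne : Type := MonoidAlgebra ℤ (FreeMonoid Bool)

/-- The generator `z_k` of 𝔡. -/
def zL (k : ℕ+) : Dfree := MonoidAlgebra.single (FreeMonoid.of (Sum.inl k)) 1

/-- The generator `ξ_k` of 𝔡. -/
def xiL (k : ℕ+) : Dfree := MonoidAlgebra.single (FreeMonoid.of (Sum.inr k)) 1

/-- The generator `ξ_k` of 𝔡_ξ. -/
def xiX (k : ℕ+) : DXi := MonoidAlgebra.single (FreeMonoid.of k) 1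

/-- The generator `z_1` of 𝔡₁. -/
def zO : DOne := MonoidAlgebra.single (FreeMonoid.of false) 1

/-- The generator `ξ_1` of 𝔡₁. -/
def xiO : DOne := MonoidAlgebra.single (FreeMonoid.of true) 1

/-- `z_k` for a natural number index `k ≥ 1` (junk value `0` for `k = 0`). -/
def zOf (k : ℕ) : Dfree := if h : 0 < k then zL ⟨k, h⟩ else 0

/-- `ξ_k ∈ 𝔡_ξ` for a natural number index `k ≥ 1` (junk value `0` for `k = 0`). -/
def xiOf (k : ℕ) : DXi := if h : 0 < k then xiX ⟨k, h⟩ else 0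

/-- The canonical embedding `𝔡_ξ ↪ 𝔡`. -/
def toD (v : DXi) : Dfree := MonoidAlgebra.ofCoeff (Finsupp.mapDomain (FreeMonoid.map Sum.inr) v.coeff)

/-- The canonical embedding `𝔡₁ ↪ 𝔡` (`false ↦ z_1`, `true ↦ ξ_1`). -/
def toD1 (w : DOne) : Dfree :=
  MonoidAlgebra.ofCoeff (Finsupp.mapDomain (FreeMonoid.map fun b => if b then Sum.inr 1 else Sum.inl 1) w.coeff)

/-- `J_{z_k}(m) = q^{(k-1)m}/[m]^k` and `J_{ξ_k}(m) = q^{km}/[m]^k`. -/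
def Jlet (q : ℝ) : Letter → ℕ → ℝ
  | Sum.inl k, m => q ^ (((k : ℕ) - 1) * m) / qint q m ^ (k : ℕ)
  | Sum.inr k, m => q ^ ((k : ℕ) * m) / qint q m ^ (k : ℕ)

/-- `A_w(M) = Σ_{M > m_1 > ... > m_r > 0} J_{u_1}(m_1) ⋯ J_{u_r}(m_r)` for a word `w = u_1 ⋯ u_r`. -/
def AW (q : ℝ) (w : List Letter) (M : ℕ) : ℝ :=
  ∑ m ∈ (Fintype.piFinset fun _ : Fin w.length => Finset.Ioo 0 M).filter
      (fun m => ∀ i j, i < j → m j < m i),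
    ∏ j, Jlet q (w.get j) (m j)

/-- `A*_w(M) = Σ_{M > m_1 ≥ ... ≥ m_r ≥ 1} J_{u_1}(m_1) ⋯ J_{u_r}(m_r)` for a word `w = u_1 ⋯ u_r`. -/
def AstarW (q : ℝ) (w : List Letter) (M : ℕ) : ℝ :=
  ∑ m ∈ (Fintype.piFinset fun _ : Fin w.length => Finset.Ioo 0 M).filter
      (fun m => ∀ i j, i ≤ j → m j ≤ m i),
    ∏ j, Jlet q (w.get j) (m j)

/-- The ℤ-linear extension `A(M) : 𝔡 → ℝ`. -/
def Amap (q : ℝ) (x : Dfree) (M : ℕ) : ℝ :=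
  Finsupp.sum x.coeff fun w a => (a : ℝ) * AW q (FreeMonoid.toList w) M

/-- The ℤ-linear extension `A*(M) : 𝔡 → ℝ`. -/
def Astarmap (q : ℝ) (x : Dfree) (M : ℕ) : ℝ :=
  Finsupp.sum x.coeff fun w a => (a : ℝ) * AstarW q (FreeMonoid.toList w) M

/-- The map `ρ` on words:  `ρ(1,w) = w`, `ρ(v,1) = v`,
`ρ(ξ_k v, z_ℓ w) = ξ_k ρ(v, z_ℓ w) + z_ℓ ρ(ξ_k v, w) + z_{k+ℓ} ρ(v,w)`, and
`ρ(ξ_k v, ξ_ℓ w) = ξ_k ρ(v, ξ_ℓ w) + ξ_ℓ ρ(ξ_k v, w) + ξ_{k+ℓ} ρ(v,w)`. -/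
def rhoW : List ℕ+ → List Letter → Dfree
  | [], w => MonoidAlgebra.single (FreeMonoid.ofList w) 1
  | k :: v, [] => MonoidAlgebra.single (FreeMonoid.ofList ((k :: v).map Sum.inr)) 1
  | k :: v, Sum.inl l :: w =>
      xiL k * rhoW v (Sum.inl l :: w) + zL l * rhoW (k :: v) w + zL (k + l) * rhoW v w
  | k :: v, Sum.inr l :: w =>
      xiL k * rhoW v (Sum.inr l :: w) + xiL l * rhoW (k :: v) w + xiL (k + l) * rhoW v w
  termination_by v w => v.length + w.length

/-- The ℤ-bilinear map `ρ : 𝔡_ξ × 𝔡 → 𝔡`. -/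
def rho (v : DXi) (x : Dfree) : Dfree :=
  Finsupp.sum v.coeff fun vw a =>
    Finsupp.sum x.coeff fun xw b => (a * b) • rhoW (FreeMonoid.toList vw) (FreeMonoid.toList xw)

/-- `ξ_k ∘ ·` on words: `ξ_k ∘ 1 = 0` and `ξ_k ∘ (ξ_ℓ v) = ξ_{k+ℓ} v`. -/
def circW (k : ℕ+) : List ℕ+ → DXi
  | [] => 0
  | l :: v => MonoidAlgebra.single (FreeMonoid.ofList ((k + l) :: v)) 1

/-- The ℤ-linear map `ξ_k ∘ · : 𝔡_ξ → 𝔡_ξ`. -/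
def circ (k : ℕ+) (x : DXi) : DXi :=
  Finsupp.sum x.coeff fun w a => a • circW k (FreeMonoid.toList w)

/-- The map `d` on words: `d(1) = 1` and `d(ξ_k v) = ξ_k d(v) + ξ_k ∘ d(v)`. -/
def dW : List ℕ+ → DXi
  | [] => 1
  | k :: v => xiX k * dW v + circ k (dW v)

/-- The ℤ-linear map `d : 𝔡_ξ → 𝔡_ξ`. -/
def dmap (v : DXi) : DXi := Finsupp.sum v.coeff fun w a => a • dW (FreeMonoid.toList w)

/-- The maps `φ_s` on words of 𝔡₁: `φ_0 = id`, `φ_s(1) = ξ_1 z_1^{s-1}` for `s ≥ 1`,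
`φ_s(z_1 w) = z_1 φ_s(w) + ξ_1 Σ_{i=1}^{s} z_1^i φ_{s-i}(w)`, and
`φ_s(ξ_1 w) = ξ_1 Σ_{i=0}^{s} z_1^i φ_{s-i}(w)`. -/
def phiW : ℕ → List Bool → DOne
  | s, [] =>
      if s = 0 then 1
      else MonoidAlgebra.single (FreeMonoid.ofList (true :: List.replicate (s - 1) false)) 1
  | s, false :: w =>
      zO * phiW s w +
        ∑ i ∈ Finset.Icc 1 s, xiO * zO ^ i * phiW (s - i) w
  | s, true :: w =>
      ∑ i ∈ Finset.range (s + 1), xiO * zO ^ i * phiW (s - i) w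
  termination_by _ w => w.length

/-- The ℤ-linear maps `φ_s : 𝔡₁ → 𝔡₁`. -/
def phi (s : ℕ) (x : DOne) : DOne := Finsupp.sum x.coeff fun w a => a • phiW s (FreeMonoid.toList w)

/-- `Φ_0 = id` and `Φ_ℓ = Σ_{r=1}^{ℓ} (-1)^r Σ_{c ∈ I(r,ℓ)} φ_{c_1} ⋯ φ_{c_r}` for `ℓ ≥ 1`. -/
def PhiM : ℕ → DOne → DOne
  | 0 => id
  | l + 1 => fun x =>
      ∑ r ∈ Finset.Icc 1 (l + 1),
        (-1 : ℤ) ^ r •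
          ∑ c ∈ Ifin r (l + 1), ((List.ofFn fun j : Fin r => phi (c j)).foldr (· ∘ ·) id) x

/-- `Z_s(w) = Σ_{ℓ=0}^{s} ρ(d(ξ_1^{s-ℓ}), Φ_ℓ(w))`. -/
def Zmap (s : ℕ) (w : DOne) : Dfree :=
  ∑ l ∈ Finset.range (s + 1), rho (dmap (xiX 1 ^ (s - l))) (toD1 (PhiM l w))

variable (q : ℝ)

lemma AW_nil (M : ℕ) : AW q [] M = 1 := by
  simp [AW]

lemma AW_cons (u : Letter) (w : List Letter) (M : ℕ) :
    AW q (u :: w) M = ∑ m ∈ Finset.Ioo 0 M, Jlet q u m * AW q w m := by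
  classical
  simp only [AW, Finset.mul_sum, List.length_cons]
  rw [← Finset.sum_sigma (Finset.Ioo 0 M)
    (fun m₀ => (Fintype.piFinset fun _ : Fin w.length => Finset.Ioo 0 m₀).filter
      (fun m => ∀ i j, i < j → m j < m i))
    (fun p => Jlet q u p.1 * ∏ j, Jlet q (w.get j) (p.2 j))]
  refine Finset.sum_nbij' (fun m => ⟨m 0, Fin.tail m⟩) (fun p => Fin.cons p.1 p.2) ?_ ?_ ?_ ?_ ?_
  · intro m hm
    simp only [Finset.mem_filter, Fintype.mem_piFinset] at hm
    obtain ⟨h1, h2⟩ := hm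
    simp only [Finset.mem_sigma, Finset.mem_filter, Fintype.mem_piFinset]
    refine ⟨h1 0, ⟨fun j => ?_, fun i j hij => h2 i.succ j.succ (by simpa using hij)⟩⟩
    · have := h1 j.succ
      simp only [Finset.mem_Ioo] at this ⊢
      exact ⟨this.1, h2 0 j.succ (Fin.succ_pos j)⟩
  · intro p hp
    simp only [Finset.mem_sigma, Finset.mem_filter, Fintype.mem_piFinset, Finset.mem_Ioo] at hp
    obtain ⟨h0, h1, h2⟩ := hp
    simp only [Finset.mem_filter, Fintype.mem_piFinset, Finset.mem_Ioo]
    constructor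
    · intro j
      refine Fin.cases ?_ (fun i => ?_) j
      · simpa using h0
      · exact ⟨(h1 i).1, lt_trans (h1 i).2 h0.2⟩
    · intro i j hij
      refine Fin.cases ?_ (fun i' hij => ?_) i hij
      · refine Fin.cases ?_ (fun j' hij => ?_) j
        · intro h; exact absurd h (lt_irrefl _)
        · simpa using (h1 j').2
      · refine Fin.cases ?_ (fun j' hij => ?_) j hij
        · intro h; exact absurd h (by simp [Fin.lt_def])
        · simp only [Fin.cons_succ]
          exact h2 i' j' (by simpa using hij)
  · intro m _; exact Fin.cons_self_tail m
  · intro p _; simp [Fin.tail_cons]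
  · intro m hm
    rw [Fin.prod_univ_succ]
    simp [Fin.tail]

/-- `Amap` as an additive hom. -/
def AmapH (q : ℝ) (M : ℕ) : Dfree →+ ℝ :=
  (Finsupp.liftAddHom fun w =>
    ((AddMonoidHom.mulRight (AW q (FreeMonoid.toList w) M)).comp (Int.castAddHom ℝ))).comp
    MonoidAlgebra.coeffAddEquiv.toAddMonoidHom

lemma Amap_eq (x : Dfree) (M : ℕ) : Amap q x M = AmapH q M x := rfl

lemma Amap_single (w : FreeMonoid Letter) (a : ℤ) (M : ℕ) :
    Amap q (MonoidAlgebra.single w a) M = a * AW q (FreeMonoid.toList w) M := by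
  simp only [Amap, MonoidAlgebra.coeff_single]
  exact Finsupp.sum_single_index (by simp)

lemma Amap_letter_mul (u : Letter) (x : Dfree) (M : ℕ) :
    Amap q (MonoidAlgebra.single (FreeMonoid.of u) 1 * x) M
      = ∑ m ∈ Finset.Ioo 0 M, Jlet q u m * Amap q x m := by
  classical
  have hx : MonoidAlgebra.single (FreeMonoid.of u) (1 : ℤ) * x
      = ∑ a ∈ x.coeff.support, MonoidAlgebra.single (FreeMonoid.of u * a) (x.coeff a) := by
    conv_lhs => rw [← MonoidAlgebra.sum_coeff_single x]
    rw [Finsupp.sum, Finset.mul_sum]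
    refine Finset.sum_congr rfl fun a _ => ?_
    rw [MonoidAlgebra.single_mul_single, one_mul]
  rw [Amap_eq, hx, map_sum]
  have : ∀ a ∈ x.coeff.support, (AmapH q M) (MonoidAlgebra.single (FreeMonoid.of u * a) (x.coeff a))
      = ∑ m ∈ Finset.Ioo 0 M, Jlet q u m * ((x.coeff a : ℝ) * AW q (FreeMonoid.toList a) m) := by
    intro a _
    rw [← Amap_eq, Amap_single]
    have : FreeMonoid.toList (FreeMonoid.of u * a) = u :: FreeMonoid.toList a := rfl
    rw [this, AW_cons, Finset.mul_sum]
    refine Finset.sum_congr rfl fun m _ => by ring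
  rw [Finset.sum_congr rfl this, Finset.sum_comm]
  refine Finset.sum_congr rfl fun m _ => ?_
  have hA : Amap q x m = ∑ a ∈ x.coeff.support, (x.coeff a : ℝ) * AW q (FreeMonoid.toList a) m := rfl
  rw [hA, Finset.mul_sum]

lemma Jlet_merge_inl (k l : ℕ+) (m : ℕ) :
    Jlet q (Sum.inr k) m * Jlet q (Sum.inl l) m = Jlet q (Sum.inl (k + l)) m := by
  simp only [Jlet, PNat.add_coe]
  rw [div_mul_div_comm, ← pow_add, ← pow_add]
  congr 1
  have : (k : ℕ) * m + ((l : ℕ) - 1) * m = ((k : ℕ) + (l : ℕ) - 1) * m := by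
    have hl : 1 ≤ (l : ℕ) := l.one_le
    obtain ⟨c, hc⟩ := Nat.exists_eq_add_of_le hl
    rw [hc, show 1 + c - 1 = c from by omega, show (k : ℕ) + (1 + c) - 1 = (k : ℕ) + c from by omega]
    ring
  rw [this]

lemma Jlet_merge_inr (k l : ℕ+) (m : ℕ) :
    Jlet q (Sum.inr k) m * Jlet q (Sum.inr l) m = Jlet q (Sum.inr (k + l)) m := by
  simp only [Jlet, PNat.add_coe]
  rw [div_mul_div_comm, ← pow_add, ← pow_add, add_mul]

lemma sum_split (M : ℕ) (f g : ℕ → ℝ) :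
    (∑ m ∈ Finset.Ioo 0 M, f m) * (∑ n ∈ Finset.Ioo 0 M, g n)
      = (∑ m ∈ Finset.Ioo 0 M, f m * ∑ n ∈ Finset.Ioo 0 m, g n)
        + (∑ n ∈ Finset.Ioo 0 M, (∑ m ∈ Finset.Ioo 0 n, f m) * g n)
        + ∑ m ∈ Finset.Ioo 0 M, f m * g m := by
  classical
  have key : ∀ m ∈ Finset.Ioo 0 M, f m * (∑ n ∈ Finset.Ioo 0 M, g n)
      = f m * ∑ n ∈ Finset.Ioo 0 m, g n
        + f m * ∑ n ∈ Finset.Ioo m M, g n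
        + f m * g m := by
    intro m hm
    simp only [Finset.mem_Ioo] at hm
    rw [← mul_add, ← mul_add]
    congr 1
    have hset : Finset.Ioo 0 M = (Finset.Ioo 0 m ∪ Finset.Ioo m M) ∪ {m} := by
      ext n; simp only [Finset.mem_union, Finset.mem_Ioo, Finset.mem_singleton]; omega
    have hd1 : Disjoint (Finset.Ioo 0 m) (Finset.Ioo m M) := by
      rw [Finset.disjoint_left]; intro n hn hn'
      simp only [Finset.mem_Ioo] at hn hn'; omega
    have hd2 : Disjoint (Finset.Ioo 0 m ∪ Finset.Ioo m M) ({m} : Finset ℕ) := by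
      rw [Finset.disjoint_left]; intro n hn hn'
      simp only [Finset.mem_union, Finset.mem_Ioo, Finset.mem_singleton] at hn hn'; omega
    rw [hset, Finset.sum_union hd2, Finset.sum_union hd1, Finset.sum_singleton]
  rw [Finset.sum_mul, Finset.sum_congr rfl key, Finset.sum_add_distrib, Finset.sum_add_distrib]
  congr 2
  -- swap the middle term
  have h1 : ∀ m ∈ Finset.Ioo 0 M, f m * ∑ n ∈ Finset.Ioo m M, g n
      = ∑ n ∈ Finset.Ioo 0 M, if m < n then f m * g n else 0 := by
    intro m hm
    simp only [Finset.mem_Ioo] at hm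
    rw [show Finset.Ioo m M = (Finset.Ioo 0 M).filter (fun n => m < n) by
      ext n; simp only [Finset.mem_Ioo, Finset.mem_filter]; omega, Finset.sum_filter,
      Finset.mul_sum]
    exact Finset.sum_congr rfl fun n _ => by split <;> simp
  have h2 : ∀ n ∈ Finset.Ioo 0 M, (∑ m ∈ Finset.Ioo 0 n, f m) * g n
      = ∑ m ∈ Finset.Ioo 0 M, if m < n then f m * g n else 0 := by
    intro n hn
    simp only [Finset.mem_Ioo] at hn
    rw [show Finset.Ioo 0 n = (Finset.Ioo 0 M).filter (fun m => m < n) by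
      ext m; simp only [Finset.mem_Ioo, Finset.mem_filter]; omega, Finset.sum_filter,
      Finset.sum_mul]
    exact Finset.sum_congr rfl fun m _ => by split <;> simp
  rw [Finset.sum_congr rfl h1, Finset.sum_congr rfl h2, Finset.sum_comm]

lemma Amap_add (x y : Dfree) (M : ℕ) :
    Amap q (x + y) M = Amap q x M + Amap q y M := by
  rw [Amap_eq, Amap_eq, Amap_eq, map_add]

lemma rhoW_nil (w : List Letter) :
    rhoW [] w = MonoidAlgebra.single (FreeMonoid.ofList w) 1 := by
  simp only [rhoW]

lemma rhoW_cons_nil (k : ℕ+) (v : List ℕ+) :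
    rhoW (k :: v) [] = MonoidAlgebra.single (FreeMonoid.ofList ((k :: v).map Sum.inr)) 1 := by
  simp only [rhoW]

lemma rhoW_cons_inl (k : ℕ+) (v : List ℕ+) (l : ℕ+) (w : List Letter) :
    rhoW (k :: v) (Sum.inl l :: w) =
      xiL k * rhoW v (Sum.inl l :: w) + zL l * rhoW (k :: v) w + zL (k + l) * rhoW v w := by
  rw [rhoW]

lemma rhoW_cons_inr (k : ℕ+) (v : List ℕ+) (l : ℕ+) (w : List Letter) :
    rhoW (k :: v) (Sum.inr l :: w) =
      xiL k * rhoW v (Sum.inr l :: w) + xiL l * rhoW (k :: v) w + xiL (k + l) * rhoW v w := by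
  rw [rhoW]

lemma step (k : ℕ+) (v' : List ℕ+) (u mu : Letter) (w' : List Letter) (M : ℕ)
    (hmerge : ∀ m, Jlet q (Sum.inr k) m * Jlet q u m = Jlet q mu m)
    (IH1 : ∀ m, AW q (v'.map Sum.inr) m * AW q (u :: w') m = Amap q (rhoW v' (u :: w')) m)
    (IH2 : ∀ m, AW q ((k :: v').map Sum.inr) m * AW q w' m = Amap q (rhoW (k :: v') w') m)
    (IH3 : ∀ m, AW q (v'.map Sum.inr) m * AW q w' m = Amap q (rhoW v' w') m) :
    AW q ((k :: v').map Sum.inr) M * AW q (u :: w') M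
      = Amap q (MonoidAlgebra.single (FreeMonoid.of (Sum.inr k)) 1 * rhoW v' (u :: w')
          + MonoidAlgebra.single (FreeMonoid.of u) 1 * rhoW (k :: v') w'
          + MonoidAlgebra.single (FreeMonoid.of mu) 1 * rhoW v' w') M := by
  rw [List.map_cons, AW_cons, AW_cons q u w' M, sum_split]
  rw [Amap_add, Amap_add, Amap_letter_mul, Amap_letter_mul, Amap_letter_mul]
  congr 1
  congr 1
  · -- term 1
    refine Finset.sum_congr rfl fun m _ => ?_
    rw [← AW_cons, mul_assoc, IH1]
  · -- term 2
    refine Finset.sum_congr rfl fun n _ => ?_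
    rw [← AW_cons, ← List.map_cons]
    rw [show AW q ((k :: v').map Sum.inr) n * (Jlet q u n * AW q w' n)
        = Jlet q u n * (AW q ((k :: v').map Sum.inr) n * AW q w' n) from by ring, IH2]
  · -- term 3
    refine Finset.sum_congr rfl fun m _ => ?_
    rw [show Jlet q (Sum.inr k) m * AW q (v'.map Sum.inr) m * (Jlet q u m * AW q w' m)
        = (Jlet q (Sum.inr k) m * Jlet q u m) * (AW q (v'.map Sum.inr) m * AW q w' m) from by
        ring, hmerge, IH3]

lemma key : ∀ (N : ℕ) (v : List ℕ+) (w : List Letter) (M : ℕ), v.length + w.length ≤ N →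
    AW q (v.map Sum.inr) M * AW q w M = Amap q (rhoW v w) M := by
  intro N
  induction N with
  | zero =>
    intro v w M h
    obtain ⟨hv, hw⟩ : v = [] ∧ w = [] := by
      constructor <;> [skip; skip] <;>
        simp_all [List.length_eq_zero_iff, Nat.le_zero, Nat.add_eq_zero]
    subst hv; subst hw
    rw [rhoW_nil, Amap_single]
    simp [AW_nil]
  | succ N ih =>
    intro v w M h
    match v, w with
    | [], w =>
      rw [rhoW_nil, Amap_single]
      simp [AW_nil]
    | k :: v', [] =>
      rw [rhoW_cons_nil, Amap_single]
      simp only [Int.cast_one, one_mul, FreeMonoid.toList_ofList]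
      rw [AW_nil, mul_one]
    | k :: v', Sum.inl l :: w' =>
      rw [rhoW_cons_inl]
      have := step q k v' (Sum.inl l) (Sum.inl (k + l)) w' M
        (fun m => Jlet_merge_inl q k l m)
        (fun m => ih v' (Sum.inl l :: w') m (by simp at h ⊢; omega))
        (fun m => ih (k :: v') w' m (by simp at h ⊢; omega))
        (fun m => ih v' w' m (by simp at h ⊢; omega))
      rw [this]
      rfl
    | k :: v', Sum.inr l :: w' =>
      rw [rhoW_cons_inr]
      have := step q k v' (Sum.inr l) (Sum.inr (k + l)) w' M
        (fun m => Jlet_merge_inr q k l m)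
        (fun m => ih v' (Sum.inr l :: w') m (by simp at h ⊢; omega))
        (fun m => ih (k :: v') w' m (by simp at h ⊢; omega))
        (fun m => ih v' w' m (by simp at h ⊢; omega))
      rw [this]
      rfl


/-- For every `v ∈ 𝔡_ξ`, every `w ∈ 𝔡` and every integer `M ≥ 1`,
`A_v(M) · A_w(M) = A_{ρ(v,w)}(M)`. -/
theorem A_mul (q : ℝ) (hq0 : 0 < q) (hq1 : q < 1) (v : DXi) (w : Dfree) (M : ℕ) (hM : 1 ≤ M) :
    Amap q (toD v) M * Amap q w M = Amap q (rho v w) M := by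
  classical
  have htoD : Amap q (toD v) M
      = ∑ a ∈ v.coeff.support, (v.coeff a : ℝ) * AW q ((FreeMonoid.toList a).map Sum.inr) M := by
    rw [Amap_eq, toD, Finsupp.mapDomain, Finsupp.sum, MonoidAlgebra.ofCoeff_sum, map_sum]
    refine Finset.sum_congr rfl fun a _ => ?_
    rw [← Amap_eq]
    exact (Amap_single q _ _ M).trans rfl
  have hw : Amap q w M = ∑ c ∈ w.coeff.support, (w.coeff c : ℝ) * AW q (FreeMonoid.toList c) M := rfl
  have hrho : Amap q (rho v w) M
      = ∑ a ∈ v.coeff.support, ∑ c ∈ w.coeff.support,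
          ((v.coeff a * w.coeff c : ℤ) : ℝ) * Amap q (rhoW (FreeMonoid.toList a) (FreeMonoid.toList c)) M := by
    rw [Amap_eq, rho, Finsupp.sum, map_sum]
    refine Finset.sum_congr rfl fun a _ => ?_
    rw [Finsupp.sum, map_sum]
    refine Finset.sum_congr rfl fun c _ => ?_
    rw [map_zsmul, ← Amap_eq]
    push_cast
    rw [zsmul_eq_mul]
    push_cast
    ring
  rw [htoD, hw, hrho, Finset.sum_mul_sum]
  refine Finset.sum_congr rfl fun a _ => Finset.sum_congr rfl fun c _ => ?_
  rw [← key q ((FreeMonoid.toList a).length + (FreeMonoid.toList c).length)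
    (FreeMonoid.toList a) (FreeMonoid.toList c) M le_rfl]
  push_cast
  ring

end
end

section
/- Let s ≥ 1, let v be one of the letters z_1 or ξ_1, and let N > M be positive integers. Then Σ_{N>n_1>...>n_{s+1}>M} p(n_1,...,n_s; n_{s+1}) J_v(n_{s+1}) = Σ_{N>k_1>...>k_{s+1}>M} J_v(k_1) p(k_2,...,k_{s+1}; M) + Σ_{i=1}^{s} Σ_{N>k_1>...>k_{s+1}>M} (q^{k_1}/[k_1]) (Π_{j=2}^{i+1} 1/[k_j]) p(k_{i+2},...,k_{s+1}; M), where p(∅;M) := 1. -/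
open scoped BigOperators

noncomputable section

attribute [local instance 10] Classical.propDecidable

namespace PT
variable {q : ℝ}

lemma qint_pos (hq0 : 0 < q) (hq1 : q < 1) {n : ℕ} (hn : 1 ≤ n) : 0 < qint q n := by
  have h1 : q ^ n < 1 := pow_lt_one₀ hq0.le hq1 (by omega)
  have : (0:ℝ) < 1 - q := by linarith
  exact div_pos (by linarith) this

lemma qint_ne (hq0 : 0 < q) (hq1 : q < 1) {n : ℕ} (hn : 1 ≤ n) : qint q n ≠ 0 :=
  (qint_pos hq0 hq1 hn).ne'

lemma qint_add (hq1 : q < 1) (x y : ℕ) :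
    qint q (x + y) = qint q y + q ^ y * qint q x := by
  unfold qint
  rw [pow_add]
  field_simp
  ring

/-- key partial fraction identity. -/
lemma idV (hq0 : 0 < q) (hq1 : q < 1) {x y : ℕ} (hx : 1 ≤ x) (hy : 1 ≤ y) :
    1 / qint q x * (1 / qint q y)
      = 1 / qint q (x + y) * (1 / qint q x + q ^ y / qint q y) := by
  have hx0 := qint_ne hq0 hq1 hx
  have hy0 := qint_ne hq0 hq1 hy
  have hxy0 := qint_ne hq0 hq1 (show 1 ≤ x + y by omega)
  have e := qint_add hq1 x y
  rw [mul_comm] at e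
  field_simp
  linear_combination e

end PT
namespace PT2
open PT Finset
variable {q : ℝ}

lemma idI (hq0 : 0 < q) (hq1 : q < 1) {n m : ℕ} (hm : 1 ≤ m) (hmn : m < n)
    (Jv : ℕ → ℝ)
    (hJv : Jv = (fun m => 1 / qint q m) ∨ Jv = (fun m => q ^ m / qint q m)) :
    q ^ (n - m) / qint q (n - m) * Jv m
      = Jv n * (q ^ (n - m) / qint q (n - m)) + q ^ n / qint q n * (1 / qint q m) := by
  have hp : q ^ (n - m) * q ^ m = q ^ n := pow_sub_mul_pow q hmn.le
  rcases hJv with h | h <;> subst h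
  · have h := idV hq0 hq1 (x := n - m) (y := m) (by omega) hm
    rw [Nat.sub_add_cancel hmn.le] at h
    simp only
    linear_combination q ^ (n - m) * h + (1 / (qint q n * qint q m)) * hp
  · have h := idV hq0 hq1 (x := m) (y := n - m) hm (by omega)
    rw [Nat.add_sub_cancel' hmn.le] at h
    simp only
    linear_combination q ^ n * h + (1 / (qint q (n - m) * qint q m)) * hp

lemma subst1 (M A : ℕ) (f : ℕ → ℝ) :
    ∑ u ∈ Finset.Ioo M A, f u = ∑ u ∈ Finset.Ioo M A, f (A + M - u) := by
  refine Finset.sum_nbij' (fun u => A + M - u) (fun u => A + M - u) ?_ ?_ ?_ ?_ ?_ <;>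
      simp only [Finset.mem_Ioo] <;> intro a ha
  · omega
  · omega
  · omega
  · omega
  · congr 1; omega

lemma merge2 (M A : ℕ) (F : ℕ → ℕ → ℝ) :
    ∑ u ∈ Finset.Ioo M A, ∑ v ∈ Finset.Ioo M u, F u v
      = ∑ u ∈ Finset.Ioo M A, ∑ v ∈ Finset.Ioo M u, F (A - u + v) v := by
  rw [Finset.sum_sigma', Finset.sum_sigma']
  refine Finset.sum_nbij' (fun x => ⟨A - x.1 + x.2, x.2⟩) (fun x => ⟨A - x.1 + x.2, x.2⟩)
    ?_ ?_ ?_ ?_ ?_ <;>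
      simp only [Finset.mem_sigma, Finset.mem_Ioo, Sigma.ext_iff, heq_eq_eq] <;>
      rintro ⟨a, b⟩ h
  · omega
  · omega
  · exact ⟨by omega, trivial⟩
  · exact ⟨by omega, trivial⟩
  · congr 1; omega

end PT2
namespace PT3
open PT PT2 Finset

def Tc (q : ℝ) : List (ℕ → ℝ) → ℕ → ℕ → ℝ
  | [], _, _ => 1
  | f :: fs, lo, hi => ∑ u ∈ Finset.Ioo lo hi, f u * Tc q fs lo u

def pivtail (q : ℝ) (M : ℕ) : ℕ → List (ℕ → ℝ)
  | 0 => []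
  | t + 1 => (fun u => q ^ (u - M) / qint q (u - M)) ::
      List.replicate t (fun u => 1 / qint q (u - M))

variable {q : ℝ}

lemma claimT (hq0 : 0 < q) (hq1 : q < 1) (M : ℕ) (hM : 1 ≤ M) :
    ∀ (r : ℕ) (A : ℕ), M < A →
    Tc q ((fun u => 1 / qint q (A + M - u)) ::
        List.replicate r (fun u => 1 / qint q (u - M))) M A
      = ∑ i ∈ Finset.range (r + 1),
          Tc q (List.replicate (i + 1) (fun u => 1 / qint q u) ++ pivtail q M (r - i)) M A := by
  intro r
  induction r with
  | zero =>
    intro A hA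
    rw [Finset.sum_range_one]
    simp only [List.replicate, pivtail, List.append_nil, Tc]
    exact (subst1 M A (fun u => 1 / qint q u * 1)).symm
  | succ r IH =>
    intro A hA
    have hTc : ∀ (L : List (ℕ → ℝ)) (f : ℕ → ℝ) (hi : ℕ),
        Tc q (f :: L) M hi = ∑ u ∈ Finset.Ioo M hi, f u * Tc q L M u := fun _ _ _ => rfl
    set T : ℕ → ℝ := Tc q (List.replicate r (fun u => 1 / qint q (u - M))) M with hT
    calc
      Tc q ((fun u => 1 / qint q (A + M - u)) ::
          List.replicate (r + 1) (fun u => 1 / qint q (u - M))) M A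
        = ∑ u ∈ Finset.Ioo M A, ∑ v ∈ Finset.Ioo M u,
            (1 / qint q (A + M - u)) * (1 / qint q (v - M) * T v) := by
          rw [hTc, List.replicate_succ, ]
          refine Finset.sum_congr rfl fun u hu => ?_
          rw [hTc, Finset.mul_sum]
      _ = ∑ u ∈ Finset.Ioo M A, ∑ v ∈ Finset.Ioo M u,
            (1 / qint q (A + M - (A - u + v))) * (1 / qint q (v - M) * T v) := by
          exact merge2 M A _
      _ = ∑ a ∈ Finset.Ioo M A, ∑ v ∈ Finset.Ioo M a,
            ((1 / qint q a) * (1 / qint q (a + M - v) * T v)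
              + (1 / qint q a) * (q ^ (v - M) / qint q (v - M) * T v)) := by
          refine Finset.sum_congr rfl fun a ha => Finset.sum_congr rfl fun v hv => ?_
          simp only [Finset.mem_Ioo] at ha hv
          rw [show A + M - (A - a + v) = a + M - v by omega]
          have h := idV hq0 hq1 (x := a + M - v) (y := v - M) (by omega) (by omega)
          rw [show a + M - v + (v - M) = a by omega] at h
          linear_combination T v * h
      _ = ∑ a ∈ Finset.Ioo M A,
            ((1 / qint q a) * Tc q ((fun u => 1 / qint q (a + M - u)) ::
                List.replicate r (fun u => 1 / qint q (u - M))) M a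
              + (1 / qint q a) * Tc q (pivtail q M (r + 1)) M a) := by
          refine Finset.sum_congr rfl fun a ha => ?_
          rw [Finset.sum_add_distrib, ← Finset.mul_sum, ← Finset.mul_sum, hTc,
            show pivtail q M (r + 1) = (fun u => q ^ (u - M) / qint q (u - M)) ::
              List.replicate r (fun u => 1 / qint q (u - M)) from rfl, hTc, ← hT]
      _ = (∑ i ∈ Finset.range (r + 1), ∑ a ∈ Finset.Ioo M A, (1 / qint q a) *
              Tc q (List.replicate (i + 1) (fun u => 1 / qint q u) ++ pivtail q M (r - i)) M a)
            + Tc q ((fun u => 1 / qint q u) :: pivtail q M (r + 1)) M A := by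
          rw [Finset.sum_add_distrib, hTc]
          congr 1
          rw [Finset.sum_comm]
          refine Finset.sum_congr rfl fun a ha => ?_
          simp only [Finset.mem_Ioo] at ha
          rw [IH a ha.1, Finset.mul_sum]
      _ = ∑ i ∈ Finset.range (r + 1 + 1),
            Tc q (List.replicate (i + 1) (fun u => 1 / qint q u) ++ pivtail q M (r + 1 - i)) M A := by
          conv_rhs => rw [Finset.sum_range_succ']
          congr 1
          · refine Finset.sum_congr rfl fun i hi => ?_
            conv_rhs => rw [show r + 1 - (i + 1) = r - i by omega, List.replicate_succ,
              List.cons_append, hTc]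

end PT3
namespace PT4
open PT PT2 PT3 Finset

def Ch (r lo hi : ℕ) : Finset (Fin r → ℕ) :=
  (Fintype.piFinset fun _ : Fin r => Finset.Ioo lo hi).filter
    fun k => ∀ i j : Fin r, i < j → k j < k i

lemma mem_Ch {r lo hi : ℕ} {k : Fin r → ℕ} :
    k ∈ Ch r lo hi ↔ (∀ j, lo < k j ∧ k j < hi) ∧ ∀ i j : Fin r, i < j → k j < k i := by
  simp [Ch, Fintype.mem_piFinset, Finset.mem_filter, Finset.mem_Ioo]

lemma Ch_anti {r lo hi : ℕ} {k : Fin r → ℕ} (hk : k ∈ Ch r lo hi) {i j : Fin r}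
    (h : i ≤ j) : k j ≤ k i := by
  rcases eq_or_lt_of_le h with h | h
  · subst h; exact le_rfl
  · exact ((mem_Ch.1 hk).2 i j h).le

lemma peel {r lo hi : ℕ} (F : (Fin (r + 1) → ℕ) → ℝ) :
    ∑ k ∈ Ch (r + 1) lo hi, F k
      = ∑ a ∈ Finset.Ioo lo hi, ∑ k ∈ Ch r lo a, F (Fin.cons a k) := by
  rw [Finset.sum_sigma']
  refine (Finset.sum_nbij' (fun x => Fin.cons x.1 x.2) (fun k => ⟨k 0, Fin.tail k⟩)
    ?_ ?_ ?_ ?_ ?_).symm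
  · rintro ⟨a, k⟩ hx
    simp only [Finset.mem_sigma, Finset.mem_Ioo] at hx
    obtain ⟨ha, hk⟩ := hx
    rw [mem_Ch] at hk ⊢
    constructor
    · intro j
      refine Fin.cases ?_ (fun j => ?_) j
      · simpa using ha
      · simp only [Fin.cons_succ]
        exact ⟨(hk.1 j).1, lt_trans (hk.1 j).2 ha.2⟩
    · intro i j hij
      rcases Fin.eq_zero_or_eq_succ i with rfl | ⟨i', rfl⟩ <;>
        rcases Fin.eq_zero_or_eq_succ j with rfl | ⟨j', rfl⟩
      · exact absurd hij (lt_irrefl _)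
      · simp only [Fin.cons_succ, Fin.cons_zero]
        exact (hk.1 j').2
      · exact absurd hij (Fin.not_lt_zero _)
      · simp only [Fin.cons_succ]
        exact hk.2 i' j' (Fin.succ_lt_succ_iff.1 hij)
  · intro k hk
    rw [mem_Ch] at hk
    simp only [Finset.mem_sigma, Finset.mem_Ioo, mem_Ch]
    refine ⟨hk.1 0, fun j => ⟨(hk.1 j.succ).1, hk.2 0 j.succ (Fin.succ_pos j)⟩,
      fun i j hij => hk.2 i.succ j.succ (Fin.succ_lt_succ_iff.2 hij)⟩
  · rintro ⟨a, k⟩ hx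
    simp only [Fin.cons_zero, Fin.tail_cons]
  · intro k hk
    exact Fin.cons_self_tail k
  · rintro ⟨a, k⟩ hx
    rfl

lemma convert (q : ℝ) : ∀ (r : ℕ) (f : Fin r → ℕ → ℝ) (lo hi : ℕ),
    ∑ k ∈ Ch r lo hi, ∏ j, f j (k j) = Tc q (List.ofFn f) lo hi := by
  intro r
  induction r with
  | zero =>
    intro f lo hi
    simp only [List.ofFn_zero, Tc, Finset.univ_eq_empty, Finset.prod_empty]
    rw [Finset.sum_const]
    have : (Ch 0 lo hi).card = 1 := by
      rw [Ch, Finset.filter_true_of_mem (fun _ _ => by intro i j h; exact absurd h i.elim0)]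
      simp [Fintype.card_piFinset]
    rw [this]; simp
  | succ r IH =>
    intro f lo hi
    rw [peel, List.ofFn_succ]
    show _ = ∑ u ∈ Finset.Ioo lo hi, f 0 u * Tc q (List.ofFn fun j => f j.succ) lo u
    refine Finset.sum_congr rfl fun a _ => ?_
    rw [← IH (fun j => f j.succ) lo a, Finset.mul_sum]
    refine Finset.sum_congr rfl fun k _ => ?_
    rw [Fin.prod_univ_succ]
    simp [Fin.cons_zero, Fin.cons_succ]

end PT4
namespace PT5
open PT PT2 PT3 PT4 Finset

lemma val_mk {n a : ℕ} (h : a < n) : ((⟨a, h⟩ : Fin n) : ℕ) = a := rfl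

lemma keq {n : ℕ} (k : Fin n → ℕ) {i j : Fin n} (h : (i : ℕ) = (j : ℕ)) : k i = k j := by
  rw [Fin.ext h]

lemma Ch_lt {r lo hi : ℕ} {k : Fin r → ℕ} (hk : k ∈ Ch r lo hi) {i j : Fin r}
    (h : (i : ℕ) < (j : ℕ)) : k j < k i := (mem_Ch.1 hk).2 i j h

lemma Ch_le {r lo hi : ℕ} {k : Fin r → ℕ} (hk : k ∈ Ch r lo hi) {i j : Fin r}
    (h : (i : ℕ) ≤ (j : ℕ)) : k j ≤ k i := by
  rcases Nat.eq_or_lt_of_le h with h | h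
  · rw [keq k h]
  · exact (Ch_lt hk h).le

lemma Ch_lb {r lo hi : ℕ} {k : Fin r → ℕ} (hk : k ∈ Ch r lo hi) (j : Fin r) :
    lo < k j := ((mem_Ch.1 hk).1 j).1

lemma Ch_ub {r lo hi : ℕ} {k : Fin r → ℕ} (hk : k ∈ Ch r lo hi) (j : Fin r) :
    k j < hi := ((mem_Ch.1 hk).1 j).2

variable (t M : ℕ)

def phiB (k : Fin (t + 2) → ℕ) : Fin (t + 2) → ℕ := fun j =>
  if (j : ℕ) = 0 then k 0
  else k ⟨(j : ℕ) - 1, by have := j.is_lt; omega⟩ + M - k (Fin.last (t + 1))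

def psiB (k : Fin (t + 2) → ℕ) : Fin (t + 2) → ℕ := fun j =>
  if (j : ℕ) = 0 then k 0
  else if h : (j : ℕ) = t + 1 then k 0 + M - k 1
  else k ⟨(j : ℕ) + 1, by have := j.is_lt; omega⟩ + (k 0 - k 1)

variable {N : ℕ} (hM : 0 < M)

lemma phiB_mem {k : Fin (t + 2) → ℕ} (hk : k ∈ Ch (t + 2) M N) :
    phiB t M k ∈ Ch (t + 2) M N := by
  have hlast : ∀ j : Fin (t + 2), k (Fin.last (t + 1)) ≤ k j :=
    fun j => Ch_le hk (by simp only [Fin.val_last]; have := j.is_lt; omega)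
  have h0 : ∀ j : Fin (t + 2), k j ≤ k 0 := fun j => Ch_le hk (Nat.zero_le _)
  rw [mem_Ch]
  constructor
  · intro j
    unfold phiB
    split_ifs with h
    · exact ⟨Ch_lb hk 0, Ch_ub hk 0⟩
    · set j' : Fin (t + 2) := ⟨(j : ℕ) - 1, by have := j.is_lt; omega⟩ with hj'
      have h1 : k (Fin.last (t + 1)) < k j' := Ch_lt hk (by simp [hj', Fin.last]; omega)
      have h2 : M < k (Fin.last (t + 1)) := Ch_lb hk _
      have h3 : k j' ≤ k 0 := h0 j'
      have h4 : k 0 < N := Ch_ub hk 0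
      omega
  · intro i j hij
    have hij' : (i : ℕ) < (j : ℕ) := hij
    unfold phiB
    have hj0 : ¬ (j : ℕ) = 0 := by omega
    rw [if_neg hj0]
    set j' : Fin (t + 2) := ⟨(j : ℕ) - 1, by have := j.is_lt; omega⟩ with hj'
    have h1 : k (Fin.last (t + 1)) < k j' := Ch_lt hk (by simp [hj', Fin.last]; omega)
    have h2 : M < k (Fin.last (t + 1)) := Ch_lb hk _
    split_ifs with h
    · have h3 : k j' ≤ k 0 := h0 j'
      omega
    · set i' : Fin (t + 2) := ⟨(i : ℕ) - 1, by have := i.is_lt; omega⟩ with hi'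
      have h5 : k j' < k i' := Ch_lt hk (by simp [hj', hi']; omega)
      omega

lemma psiB_mem {k : Fin (t + 2) → ℕ} (hk : k ∈ Ch (t + 2) M N) :
    psiB t M k ∈ Ch (t + 2) M N := by
  have h01 : k 1 < k 0 := Ch_lt hk (by simp)
  have h1M : M < k 1 := Ch_lb hk 1
  have h0N : k 0 < N := Ch_ub hk 0
  rw [mem_Ch]
  constructor
  · intro j
    unfold psiB
    split_ifs with h h2
    · exact ⟨Ch_lb hk 0, Ch_ub hk 0⟩
    · omega
    · set j' : Fin (t + 2) := ⟨(j : ℕ) + 1, by have := j.is_lt; omega⟩ with hj'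
      have h3 : k j' < k 1 := Ch_lt hk (by simp only [hj', Fin.val_one, val_mk]; omega)
      have h4 : M < k j' := Ch_lb hk _
      omega
  · intro i j hij
    have hij' : (i : ℕ) < (j : ℕ) := hij
    have hjlt := j.is_lt
    unfold psiB
    have hj0 : ¬ (j : ℕ) = 0 := by omega
    rw [if_neg hj0]
    by_cases hjl : (j : ℕ) = t + 1
    · rw [dif_pos hjl]
      by_cases hi0 : (i : ℕ) = 0
      · rw [if_pos hi0]
        omega
      · rw [if_neg hi0, dif_neg (by omega)]
        have h4 : M < k (⟨(i : ℕ) + 1, by have := i.is_lt; omega⟩ : Fin (t + 2)) := Ch_lb hk _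
        omega
    · rw [dif_neg hjl]
      have h3 : k (⟨(j : ℕ) + 1, by have := j.is_lt; omega⟩ : Fin (t + 2)) < k 1 :=
        Ch_lt hk (by simp only [Fin.val_one, val_mk]; omega)
      by_cases hi0 : (i : ℕ) = 0
      · rw [if_pos hi0]
        omega
      · rw [if_neg hi0, dif_neg (by omega)]
        have h5 : k (⟨(j : ℕ) + 1, by have := j.is_lt; omega⟩ : Fin (t + 2))
            < k (⟨(i : ℕ) + 1, by have := i.is_lt; omega⟩ : Fin (t + 2)) :=
          Ch_lt hk (by simp; omega)
        omega

lemma phiB_app0 {k : Fin (t + 2) → ℕ} {i : Fin (t + 2)} (h : (i : ℕ) = 0) :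
    phiB t M k i = k 0 := by simp [phiB, h]

lemma phiB_app {k : Fin (t + 2) → ℕ} {i i' : Fin (t + 2)} (h : (i : ℕ) ≠ 0)
    (h' : (i' : ℕ) = (i : ℕ) - 1) :
    phiB t M k i = k i' + M - k (Fin.last (t + 1)) := by
  simp only [phiB, if_neg h]
  rw [keq k (i := (⟨(i : ℕ) - 1, by have := i.is_lt; omega⟩ : Fin (t+2))) (j := i') h'.symm]

lemma psiB_app0 {k : Fin (t + 2) → ℕ} {i : Fin (t + 2)} (h : (i : ℕ) = 0) :
    psiB t M k i = k 0 := by simp [psiB, h]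

lemma psiB_applast {k : Fin (t + 2) → ℕ} {i : Fin (t + 2)} (h : (i : ℕ) = t + 1) :
    psiB t M k i = k 0 + M - k 1 := by simp [psiB, h]

lemma psiB_appmid {k : Fin (t + 2) → ℕ} {i i' : Fin (t + 2)} (h0 : (i : ℕ) ≠ 0)
    (h1 : (i : ℕ) ≠ t + 1) (h' : (i' : ℕ) = (i : ℕ) + 1) :
    psiB t M k i = k i' + (k 0 - k 1) := by
  simp only [psiB, if_neg h0, dif_neg h1]
  rw [keq k (i := (⟨(i : ℕ) + 1, by have := i.is_lt; omega⟩ : Fin (t+2))) (j := i') h'.symm]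

lemma psiB_phiB {k : Fin (t + 2) → ℕ} (hk : k ∈ Ch (t + 2) M N) :
    psiB t M (phiB t M k) = k := by
  have h2 : M < k (Fin.last (t + 1)) := Ch_lb hk _
  have h0 : ∀ j : Fin (t + 2), k j ≤ k 0 := fun j => Ch_le hk (Nat.zero_le _)
  funext j
  have hjlt := j.is_lt
  have h0j := h0 j
  by_cases hj0 : (j : ℕ) = 0
  · rw [psiB_app0 t M hj0, phiB_app0 t M rfl, keq k hj0.symm]
  have hv1 : ((1 : Fin (t + 2)) : ℕ) = 1 := rfl
  by_cases hjl : (j : ℕ) = t + 1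
  · rw [psiB_applast t M hjl, phiB_app0 t M rfl,
      phiB_app t M (i := 1) (i' := 0) (by rw [hv1]; omega) (by rw [hv1]; rfl)]
    have e2 : k (Fin.last (t + 1)) = k j := keq k (by rw [Fin.val_last, hjl])
    rw [e2] at h2 ⊢
    omega
  · rw [psiB_appmid t M (i' := ⟨(j : ℕ) + 1, by omega⟩) hj0 hjl rfl,
      phiB_app t M (i := (⟨(j : ℕ) + 1, by omega⟩ : Fin (t+2))) (i' := j) (by try simp only [val_mk]; omega)
        (by try simp only [val_mk]; omega),
      phiB_app0 t M rfl,
      phiB_app t M (i := 1) (i' := 0) (by rw [hv1]; omega) (by rw [hv1]; rfl)]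
    have h3 : k (Fin.last (t + 1)) ≤ k j :=
      Ch_le hk (by rw [Fin.val_last]; omega)
    omega

lemma phiB_psiB {k : Fin (t + 2) → ℕ} (hk : k ∈ Ch (t + 2) M N) :
    phiB t M (psiB t M k) = k := by
  have h01 : k 1 < k 0 := Ch_lt hk (by rw [Fin.val_zero, Fin.val_one]; omega)
  have h1M : M < k 1 := Ch_lb hk 1
  funext j
  have hjlt := j.is_lt
  have h0j : k j ≤ k 0 := Ch_le hk (Nat.zero_le _)
  by_cases hj0 : (j : ℕ) = 0
  · rw [phiB_app0 t M hj0, psiB_app0 t M rfl, keq k hj0.symm]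
  rw [phiB_app t M (i' := ⟨(j : ℕ) - 1, by omega⟩) hj0 rfl,
    psiB_applast t M (i := Fin.last (t + 1)) (by rw [Fin.val_last])]
  have hv1 : ((1 : Fin (t + 2)) : ℕ) = 1 := rfl
  by_cases hj1 : (j : ℕ) = 1
  · rw [psiB_app0 t M (i := ⟨(j : ℕ) - 1, by omega⟩) (by try simp only [val_mk]; omega)]
    rw [keq k (i := (1 : Fin (t + 2))) (j := j) (show ((1 : Fin (t+2)) : ℕ) = (j : ℕ) by rw [hv1]; omega)]
    omega
  · rw [psiB_appmid t M (i := ⟨(j : ℕ) - 1, by omega⟩) (i' := j)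
      (by try simp only [val_mk]; omega) (by try simp only [val_mk]; omega) (by try simp only [val_mk]; omega)]
    have h3 : k j ≤ k 1 := Ch_le hk (by rw [Fin.val_one]; omega)
    omega

end PT5
namespace PT6
open PT PT2 PT3 PT4 PT5 Finset

lemma pivtail_length (q : ℝ) (M n : ℕ) : (pivtail q M n).length = n := by
  cases n <;> simp [pivtail]

lemma pivtail_getElem (q : ℝ) (M n m : ℕ) (h : m < (pivtail q M n).length) :
    (pivtail q M n)[m] = if m = 0 then (fun u => q ^ (u - M) / qint q (u - M))
      else (fun u => 1 / qint q (u - M)) := by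
  rcases n with _ | n
  · simp [pivtail] at h
  · rcases m with _ | m
    · simp [pivtail]
    · simp only [pivtail, List.getElem_cons_succ, List.getElem_replicate]
      rw [if_neg (by omega)]

lemma ofFn_eq_list (q : ℝ) (M t i : ℕ) (hi : i ≤ t) :
    List.ofFn (fun j : Fin (t + 2) =>
      if (j : ℕ) = 0 then (fun u => q ^ u / qint q u)
      else if (j : ℕ) ≤ i + 1 then (fun u => 1 / qint q u)
      else if (j : ℕ) = i + 2 then (fun u => q ^ (u - M) / qint q (u - M))
      else (fun u => 1 / qint q (u - M)))
    = (fun u => q ^ u / qint q u) ::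
        (List.replicate (i + 1) (fun u : ℕ => 1 / qint q u) ++ pivtail q M (t - i)) := by
  apply List.ext_getElem
  · simp [pivtail_length]
    omega
  · intro m h1 h2
    rw [List.getElem_ofFn]
    rcases m with _ | m
    · simp
    · rw [List.getElem_cons_succ, val_mk]
      rw [if_neg (by omega)]
      by_cases hm : m < i + 1
      · rw [List.getElem_append_left (by simpa using hm), List.getElem_replicate,
          if_pos (by omega)]
      · rw [List.getElem_append_right (by simpa using hm), pivtail_getElem]
        simp only [List.length_replicate]
        rw [if_neg (by omega)]
        by_cases hm2 : m + 1 = i + 2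
        · rw [if_pos hm2, if_pos (by omega)]
        · rw [if_neg hm2, if_neg (by omega)]

lemma ofFn_eq_list2 (q : ℝ) (M t A : ℕ) :
    List.ofFn (fun j : Fin (t + 1) =>
      if (j : ℕ) = 0 then (fun u => 1 / qint q (A + M - u))
      else (fun u => 1 / qint q (u - M)))
    = (fun u => 1 / qint q (A + M - u)) :: List.replicate t (fun u : ℕ => 1 / qint q (u - M)) := by
  apply List.ext_getElem
  · simp
  · intro m h1 h2
    rw [List.getElem_ofFn]
    rcases m with _ | m
    · simp
    · rw [List.getElem_cons_succ, val_mk, if_neg (by omega), List.getElem_replicate]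

lemma prod_split {n a b : ℕ} (h : a + b = n) (g : Fin n → ℝ) :
    ∏ j, g j = (∏ j : Fin a, g ⟨(j : ℕ), by omega⟩) * ∏ j : Fin b, g ⟨a + (j : ℕ), by omega⟩ := by
  subst h
  rw [Fin.prod_univ_add]
  congr 1 <;> exact Finset.prod_congr rfl fun j _ => congrArg g (Fin.ext (by simp))

end PT6
namespace PTMain
open PT PT2 PT3 PT4 PT5 PT6 Finset

lemma prod_fin_cast {a b : ℕ} (h : a = b) (f : Fin a → ℝ) (g : Fin b → ℝ)
    (hfg : ∀ j : Fin b, f ⟨(j : ℕ), by omega⟩ = g j) : ∏ j, f j = ∏ j, g j := by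
  subst h
  exact Finset.prod_congr rfl fun j _ => by rw [← hfg j]

set_option maxHeartbeats 1000000 in
lemma hprod (q : ℝ) (M t : ℕ) (i : Fin (t + 1)) (k : Fin (t + 2) → ℕ) :
    (∏ j : Fin (t + 2), (if (j : ℕ) = 0 then (fun u => q ^ u / qint q u)
       else if (j : ℕ) ≤ (i : ℕ) + 1 then (fun u : ℕ => 1 / qint q u)
       else if (j : ℕ) = (i : ℕ) + 2 then (fun u => q ^ (u - M) / qint q (u - M))
       else (fun u => 1 / qint q (u - M))) (k j))
    = q ^ k 0 / qint q (k 0) *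
        (∏ j : Fin ((i : ℕ) + 1), 1 / qint q (k ⟨(j : ℕ) + 1, by have := j.is_lt; have := i.is_lt; omega⟩)) *
        pS q (fun j : Fin (t + 1 - (i : ℕ) - 1) =>
          k ⟨(i : ℕ) + 2 + (j : ℕ), by have := j.is_lt; have := i.is_lt; omega⟩) M := by
  have hit : (i : ℕ) ≤ t := by have := i.is_lt; omega
  rw [Fin.prod_univ_succ, if_pos (show ((0 : Fin (t + 2)) : ℕ) = 0 from rfl), mul_assoc]
  refine congrArg (fun z => q ^ k 0 / qint q (k 0) * z) ?_
  rw [prod_split (a := (i : ℕ) + 1) (b := t - (i : ℕ)) (by omega)]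
  refine congrArg₂ (· * ·) ?_ ?_
  · refine Finset.prod_congr rfl fun j _ => ?_
    have hj := j.is_lt
    simp only [Fin.val_succ, val_mk]
    rw [if_neg (by omega), if_pos (by omega)]
    exact congrArg (fun z => 1 / qint q z) (keq k (by simp only [Fin.val_succ, val_mk]))
  · simp only [pS]
    refine (prod_fin_cast (show t + 1 - (i : ℕ) - 1 = t - (i : ℕ) by omega) _ _ fun j => ?_).symm
    have hj := j.is_lt
    simp only [Fin.val_succ, val_mk]
    have e3 : k ⟨(i : ℕ) + 2 + (j : ℕ), by omega⟩
        = k (⟨(i : ℕ) + 1 + (j : ℕ), by omega⟩ : Fin (t + 1)).succ :=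
      keq k (by simp only [Fin.val_succ, val_mk]; omega)
    rw [e3]
    split_ifs <;> first | rfl | (exfalso; first | assumption | omega)

end PTMain
open PT PT2 PT3 PT4 PT5 PT6 PTMain Finset in
/-- Let `s ≥ 1`, let `J_v` be one of `m ↦ 1/[m]` (i.e. `v = z_1`) or `m ↦ q^m/[m]`
(i.e. `v = ξ_1`), and let `N > M` be positive integers.  Then
`Σ_{N>n_1>...>n_{s+1}>M} p(n_1,...,n_s;n_{s+1}) J_v(n_{s+1})
  = Σ_{N>k_1>...>k_{s+1}>M} J_v(k_1) p(k_2,...,k_{s+1};M)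
  + Σ_{i=1}^{s} Σ_{N>k_1>...>k_{s+1}>M} (q^{k_1}/[k_1]) (Π_{j=2}^{i+1} 1/[k_j])
      p(k_{i+2},...,k_{s+1};M)`,
where `p(∅;M) = 1`.  (Here the summation index `i : Fin s` stands for the value `i+1 ∈ {1,...,s}`.) -/
theorem p_through (q : ℝ) (hq0 : 0 < q) (hq1 : q < 1) (s : ℕ) (hs : 1 ≤ s)
    (Jv : ℕ → ℝ)
    (hJv : Jv = (fun m => 1 / qint q m) ∨ Jv = (fun m => q ^ m / qint q m))
    (N M : ℕ) (hM : 0 < M) (hNM : M < N) :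
    (∑ n ∈ (Fintype.piFinset fun _ : Fin (s + 1) => Finset.Ioo M N).filter
        (fun n => ∀ i j : Fin (s + 1), i < j → n j < n i),
      pS q (fun j : Fin s => n j.castSucc) (n (Fin.last s)) * Jv (n (Fin.last s))) =
    (∑ k ∈ (Fintype.piFinset fun _ : Fin (s + 1) => Finset.Ioo M N).filter
        (fun k => ∀ i j : Fin (s + 1), i < j → k j < k i),
      Jv (k 0) * pS q (fun j : Fin s => k j.succ) M) +
    ∑ i : Fin s,
      ∑ k ∈ (Fintype.piFinset fun _ : Fin (s + 1) => Finset.Ioo M N).filter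
          (fun k => ∀ i' j : Fin (s + 1), i' < j → k j < k i'),
        q ^ k 0 / qint q (k 0) *
          (∏ j : Fin ((i : ℕ) + 1), 1 / qint q (k ⟨(j : ℕ) + 1, by omega⟩)) *
          pS q (fun j : Fin (s - (i : ℕ) - 1) => k ⟨(i : ℕ) + 2 + (j : ℕ), by omega⟩) M := by

  obtain ⟨t, rfl⟩ : ∃ t, s = t + 1 := ⟨s - 1, by omega⟩
  have hM1 : 1 ≤ M := hM
  -- the last index
  set L : Fin (t + 2) := Fin.last (t + 1) with hL
  have hvL : (L : ℕ) = t + 1 := rfl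
  -- Step 1: pointwise splitting of the summand
  have hsplit : ∀ n ∈ Ch (t + 2) M N,
      pS q (fun j : Fin (t + 1) => n j.castSucc) (n L) * Jv (n L)
        = Jv (n 0) * pS q (fun j : Fin (t + 1) => n j.castSucc) (n L)
          + (q ^ (n 0) / qint q (n 0)) * ((1 / qint q (n L))
              * ∏ j : Fin t, 1 / qint q (n (j.succ.castSucc) - n L)) := by
    intro n hn
    have hL0 : n L < n 0 := Ch_lt hn (by rw [Fin.val_zero, hvL]; omega)
    have hLM : M < n L := Ch_lb hn _
    have e : pS q (fun j : Fin (t + 1) => n j.castSucc) (n L)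
        = (q ^ (n 0 - n L) / qint q (n 0 - n L))
            * ∏ j : Fin t, 1 / qint q (n (j.succ.castSucc) - n L) := by
      simp only [pS]
      rw [Fin.prod_univ_succ]
      have e0 : n ((0 : Fin (t + 1)).castSucc) = n 0 := keq n (by simp)
      rw [e0, if_pos (show ((0 : Fin (t + 1)) : ℕ) = 0 from rfl)]
      exact congrArg (fun z => q ^ (n 0 - n L) / qint q (n 0 - n L) * z)
        (Finset.prod_congr rfl fun j _ => by rw [if_neg (by simp)])
    rw [e]
    have key := idI hq0 hq1 (m := n L) (n := n 0) (by omega) hL0 Jv hJv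
    linear_combination (∏ j : Fin t, 1 / qint q (n (j.succ.castSucc) - n L)) * key
  -- Step 2: term A via the bijection
  have keyA : (∑ n ∈ Ch (t + 2) M N,
        Jv (n 0) * pS q (fun j : Fin (t + 1) => n j.castSucc) (n L))
      = ∑ k ∈ Ch (t + 2) M N, Jv (k 0) * pS q (fun j : Fin (t + 1) => k j.succ) M := by
    refine Finset.sum_nbij' (phiB t M) (psiB t M) (fun n hn => phiB_mem t M hn)
      (fun k hk => psiB_mem t M hk) (fun n hn => psiB_phiB t M hn)
      (fun k hk => phiB_psiB t M hk) (fun n hn => ?_)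
    rw [phiB_app0 t M rfl]
    congr 1
    simp only [pS]
    refine Finset.prod_congr rfl fun j _ => ?_
    have harg : phiB t M n j.succ - M = n j.castSucc - n L := by
      rw [phiB_app t M (i := j.succ) (i' := j.castSucc) (by simp) (by simp)]
      have h1 : n L ≤ n j.castSucc :=
        Ch_le hn (by rw [hvL, Fin.coe_castSucc]; have := j.is_lt; omega)
      rw [← hL]
      omega
    rw [harg]
  -- Step 3: term B via the bijection
  have keyB : (∑ n ∈ Ch (t + 2) M N,
        (q ^ (n 0) / qint q (n 0)) * ((1 / qint q (n L))
          * ∏ j : Fin t, 1 / qint q (n (j.succ.castSucc) - n L)))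
      = ∑ k ∈ Ch (t + 2) M N,
          (q ^ (k 0) / qint q (k 0)) * ((1 / qint q (k 0 + M - k 1))
            * ∏ j : Fin t, 1 / qint q (k ⟨(j : ℕ) + 2, by have := j.is_lt; omega⟩ - M)) := by
    refine Finset.sum_nbij' (phiB t M) (psiB t M) (fun n hn => phiB_mem t M hn)
      (fun k hk => psiB_mem t M hk) (fun n hn => psiB_phiB t M hn)
      (fun k hk => phiB_psiB t M hk) (fun n hn => ?_)
    have hL0 : n L < n 0 := Ch_lt hn (by rw [Fin.val_zero, hvL]; omega)
    have hLM : M < n L := Ch_lb hn _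
    have e1 : phiB t M n 0 = n 0 := phiB_app0 t M rfl
    have e2 : n 0 + M - phiB t M n 1 = n L := by
      rw [phiB_app t M (i := 1) (i' := 0)
        (show ((1 : Fin (t+2)) : ℕ) ≠ 0 by rw [Fin.val_one]; omega)
        (by rw [Fin.val_one]; rfl), ← hL]
      omega
    have e3 : ∀ j : Fin t,
        phiB t M n ⟨(j : ℕ) + 2, by have := j.is_lt; omega⟩ - M
          = n j.succ.castSucc - n L := by
      intro j
      rw [phiB_app t M (i := ⟨(j : ℕ) + 2, by have := j.is_lt; omega⟩) (i' := j.succ.castSucc)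
        (by rw [val_mk]; omega) (by simp [val_mk]), ← hL]
      have h1 : n L ≤ n j.succ.castSucc :=
        Ch_le hn (by rw [hvL, Fin.coe_castSucc, Fin.val_succ]; have := j.is_lt; omega)
      omega
    rw [e1, e2]
    exact congrArg (fun z => q ^ n 0 / qint q (n 0) * (1 / qint q (n L) * z))
      (Finset.prod_congr rfl fun j _ => by rw [e3 j])
  -- Step 4: evaluating term B by claimT
  have keyC : (∑ k ∈ Ch (t + 2) M N,
        (q ^ (k 0) / qint q (k 0)) * ((1 / qint q (k 0 + M - k 1))
          * ∏ j : Fin t, 1 / qint q (k ⟨(j : ℕ) + 2, by have := j.is_lt; omega⟩ - M)))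
      = ∑ i : Fin (t + 1), ∑ k ∈ Ch (t + 2) M N,
          q ^ k 0 / qint q (k 0) *
            (∏ j : Fin ((i : ℕ) + 1), 1 / qint q (k ⟨(j : ℕ) + 1, by have := j.is_lt; have := i.is_lt; omega⟩)) *
            pS q (fun j : Fin (t + 1 - (i : ℕ) - 1) =>
              k ⟨(i : ℕ) + 2 + (j : ℕ), by have := j.is_lt; have := i.is_lt; omega⟩) M := by
    calc
      (∑ k ∈ Ch (t + 2) M N,
        (q ^ (k 0) / qint q (k 0)) * ((1 / qint q (k 0 + M - k 1))
          * ∏ j : Fin t, 1 / qint q (k ⟨(j : ℕ) + 2, by have := j.is_lt; omega⟩ - M)))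
        = ∑ A ∈ Finset.Ioo M N, ∑ k ∈ Ch (t + 1) M A,
            (q ^ ((Fin.cons A k : Fin (t + 2) → ℕ) 0) / qint q ((Fin.cons A k : Fin (t + 2) → ℕ) 0)) *
              ((1 / qint q ((Fin.cons A k : Fin (t + 2) → ℕ) 0 + M - (Fin.cons A k : Fin (t + 2) → ℕ) 1))
                * ∏ j : Fin t, 1 / qint q ((Fin.cons A k : Fin (t + 2) → ℕ)
                    ⟨(j : ℕ) + 2, by have := j.is_lt; omega⟩ - M)) := peel _
      _ = ∑ A ∈ Finset.Ioo M N, (q ^ A / qint q A) *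
            Tc q ((fun u => 1 / qint q (A + M - u)) ::
              List.replicate t (fun u => 1 / qint q (u - M))) M A := by
          refine Finset.sum_congr rfl fun A hA => ?_
          rw [← ofFn_eq_list2 q M t A, ← convert q (t + 1) _ M A, Finset.mul_sum]
          refine Finset.sum_congr rfl fun k hk => ?_
          have e2 : ∀ j : Fin t,
              (Fin.cons A k : Fin (t + 2) → ℕ) ⟨(j : ℕ) + 2, by have := j.is_lt; omega⟩
                = k j.succ := by
            intro j
            have h5 : (⟨(j : ℕ) + 2, by have := j.is_lt; omega⟩ : Fin (t + 2))
                = Fin.succ ⟨(j : ℕ) + 1, by have := j.is_lt; omega⟩ := rfl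
            rw [h5, Fin.cons_succ]
            exact keq k (by simp [val_mk])
          calc (q ^ ((Fin.cons A k : Fin (t + 2) → ℕ) 0) / qint q ((Fin.cons A k : Fin (t + 2) → ℕ) 0)) *
              ((1 / qint q ((Fin.cons A k : Fin (t + 2) → ℕ) 0 + M - (Fin.cons A k : Fin (t + 2) → ℕ) 1))
                * ∏ j : Fin t, 1 / qint q ((Fin.cons A k : Fin (t + 2) → ℕ)
                    ⟨(j : ℕ) + 2, by have := j.is_lt; omega⟩ - M))
              = (q ^ A / qint q A) * ((1 / qint q (A + M - k 0))
                  * ∏ j : Fin t, 1 / qint q (k j.succ - M)) := by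
                rw [show ((Fin.cons A k : Fin (t + 2) → ℕ) 0) = A from rfl,
                  show ((Fin.cons A k : Fin (t + 2) → ℕ) 1) = k 0 from rfl]
                exact congrArg (fun z => q ^ A / qint q A * (1 / qint q (A + M - k 0) * z))
                  (Finset.prod_congr rfl fun j _ => by rw [e2 j])
            _ = (q ^ A / qint q A) * ∏ j : Fin (t + 1),
                  (if (j : ℕ) = 0 then (fun u => 1 / qint q (A + M - u))
                    else (fun u => 1 / qint q (u - M))) (k j) := by
                rw [Fin.prod_univ_succ, if_pos (show ((0 : Fin (t + 1)) : ℕ) = 0 from rfl)]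
                exact congrArg (fun z => q ^ A / qint q A * (1 / qint q (A + M - k 0) * z))
                  (Finset.prod_congr rfl fun j _ => by
                    rw [if_neg (by rw [Fin.val_succ]; omega)])
      _ = ∑ A ∈ Finset.Ioo M N, (q ^ A / qint q A) *
            ∑ i ∈ Finset.range (t + 1),
              Tc q (List.replicate (i + 1) (fun u => 1 / qint q u) ++ pivtail q M (t - i)) M A := by
          refine Finset.sum_congr rfl fun A hA => ?_
          rw [claimT hq0 hq1 M hM1 t A (Finset.mem_Ioo.1 hA).1]
      _ = ∑ i ∈ Finset.range (t + 1),
            Tc q ((fun u => q ^ u / qint q u) ::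
              (List.replicate (i + 1) (fun u => 1 / qint q u) ++ pivtail q M (t - i))) M N := by
          simp only [Finset.mul_sum]
          rw [Finset.sum_comm]
          rfl
      _ = ∑ i : Fin (t + 1),
            Tc q ((fun u => q ^ u / qint q u) ::
              (List.replicate ((i : ℕ) + 1) (fun u => 1 / qint q u) ++ pivtail q M (t - (i : ℕ)))) M N := by
          rw [← Fin.sum_univ_eq_sum_range (fun m =>
            Tc q ((fun u => q ^ u / qint q u) ::
              (List.replicate (m + 1) (fun u => 1 / qint q u) ++ pivtail q M (t - m))) M N) (t + 1)]
      _ = _ := by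
          refine Finset.sum_congr rfl fun i _ => ?_
          have hit : (i : ℕ) ≤ t := by have := i.is_lt; omega
          rw [← ofFn_eq_list q M t (i : ℕ) hit, ← convert q (t + 2) _ M N]
          exact Finset.sum_congr rfl fun k hk => hprod q M t i k
  -- assemble
  calc
    (∑ n ∈ Ch (t + 2) M N,
        pS q (fun j : Fin (t + 1) => n j.castSucc) (n L) * Jv (n L))
      = ∑ n ∈ Ch (t + 2) M N,
          (Jv (n 0) * pS q (fun j : Fin (t + 1) => n j.castSucc) (n L)
            + (q ^ (n 0) / qint q (n 0)) * ((1 / qint q (n L))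
                * ∏ j : Fin t, 1 / qint q (n (j.succ.castSucc) - n L))) :=
        Finset.sum_congr rfl hsplit
    _ = (∑ k ∈ Ch (t + 2) M N, Jv (k 0) * pS q (fun j : Fin (t + 1) => k j.succ) M)
          + ∑ i : Fin (t + 1), ∑ k ∈ Ch (t + 2) M N,
              q ^ k 0 / qint q (k 0) *
                (∏ j : Fin ((i : ℕ) + 1), 1 / qint q (k ⟨(j : ℕ) + 1, by have := j.is_lt; have := i.is_lt; omega⟩)) *
                pS q (fun j : Fin (t + 1 - (i : ℕ) - 1) =>
                  k ⟨(i : ℕ) + 2 + (j : ℕ), by have := j.is_lt; have := i.is_lt; omega⟩) M := by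
        rw [Finset.sum_add_distrib, keyA, keyB, keyC]

end
end

section
/- For every w ∈ 𝔡_1 and all positive integers s, s' and N, one has Σ_{N>M_1>M_2>0} f_{s'}(N,M_1) f_s(M_1,M_2) A_w(M_2) = Σ_{N>M>0} f_{s'}(N,M) A_{φ_s(w)}(M). -/
open scoped BigOperators

noncomputable section

attribute [local instance 10] Classical.propDecidable

namespace FFC

/-! ### Scalar preliminaries -/

variable {q : ℝ}

lemma one_sub_pow_pos (hq0 : 0 < q) (hq1 : q < 1) {n : ℕ} (hn : 0 < n) :
    0 < 1 - q ^ n := by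
  have h := pow_lt_one₀ hq0.le hq1 hn.ne'
  linarith

noncomputable def bW (q : ℝ) (m : ℕ) : ℝ := 1 / qint q m

noncomputable def xW (q : ℝ) (m : ℕ) : ℝ := q ^ m / qint q m

noncomputable def JBf (q : ℝ) : Bool → ℕ → ℝ
  | true, m => xW q m
  | false, m => bW q m

lemma keyID (hq0 : 0 < q) (hq1 : q < 1) (u : Bool) {d m : ℕ} (hd : 0 < d) (hm : 0 < m) :
    xW q d * JBf q u m = JBf q u (d + m) * xW q d + xW q (d + m) * bW q m := by
  have h1 : (1 : ℝ) - q ≠ 0 := by linarith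
  have hd' : (1:ℝ) - q ^ d ≠ 0 := (one_sub_pow_pos hq0 hq1 hd).ne'
  have hm' : (1:ℝ) - q ^ m ≠ 0 := (one_sub_pow_pos hq0 hq1 hm).ne'
  have hdm' : (1:ℝ) - q ^ d * q ^ m ≠ 0 := by
    rw [← pow_add]; exact (one_sub_pow_pos hq0 hq1 (by omega)).ne'
  cases u <;>
    (simp only [JBf, bW, xW, qint, pow_add]; field_simp; ring)

lemma ID3 (hq0 : 0 < q) (hq1 : q < 1) {d m : ℕ} (hd : 0 < d) (hm : 0 < m) :
    bW q d * bW q m = bW q (d + m) * xW q d + bW q (d + m) * bW q m := by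
  have h1 : (1 : ℝ) - q ≠ 0 := by linarith
  have hd' : (1:ℝ) - q ^ d ≠ 0 := (one_sub_pow_pos hq0 hq1 hd).ne'
  have hm' : (1:ℝ) - q ^ m ≠ 0 := (one_sub_pow_pos hq0 hq1 hm).ne'
  have hdm' : (1:ℝ) - q ^ d * q ^ m ≠ 0 := by
    rw [← pow_add]; exact (one_sub_pow_pos hq0 hq1 (by omega)).ne'
  simp only [bW, xW, qint, pow_add]; field_simp; ring

/-! ### The recursive (single-sum) world -/

noncomputable def SDf (q : ℝ) : List Bool → ℕ → ℝ
  | [], _ => 1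
  | u :: L, M => ∑ m ∈ Finset.Ioo 0 M, JBf q u m * SDf q L m

lemma SDf_nil (M : ℕ) : SDf q [] M = 1 := rfl

lemma SDf_cons (u : Bool) (L : List Bool) (M : ℕ) :
    SDf q (u :: L) M = ∑ m ∈ Finset.Ioo 0 M, JBf q u m * SDf q L m := rfl

noncomputable def Zbf (q : ℝ) (t d : ℕ) : ℝ := SDf q (List.replicate t false) d

lemma Zbf_zero (d : ℕ) : Zbf q 0 d = 1 := rfl

lemma Zbf_succ (t d : ℕ) : Zbf q (t + 1) d = ∑ a ∈ Finset.Ioo 0 d, bW q a * Zbf q t a := by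
  rw [Zbf, List.replicate_succ, SDf_cons]
  rfl

noncomputable def fDf (q : ℝ) (s N M : ℕ) : ℝ :=
  if M < N then xW q (N - M) * Zbf q (s - 1) (N - M) else 0

noncomputable def Sff (q : ℝ) (t : ℕ) (h : ℕ → ℝ) (p : ℕ) : ℝ :=
  ∑ m ∈ Finset.Ioo 0 p, fDf q t p m * h m

noncomputable def ZIf (q : ℝ) : ℕ → (ℕ → ℝ) → ℕ → ℝ
  | 0, g, n => g n
  | i + 1, g, n => ∑ p ∈ Finset.Ioo 0 n, bW q p * ZIf q i g p

lemma ZIf_zero (g : ℕ → ℝ) (n : ℕ) : ZIf q 0 g n = g n := rfl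

lemma ZIf_succ (i : ℕ) (g : ℕ → ℝ) (n : ℕ) :
    ZIf q (i + 1) g n = ∑ p ∈ Finset.Ioo 0 n, bW q p * ZIf q i g p := rfl

noncomputable def Vf (q : ℝ) (s m N : ℕ) : ℝ :=
  if m < N then bW q m * Zbf q (s - 1) (N - m) else 0

/-! ### Elementary sum manipulation lemmas -/

lemma Ioo_succ_eq {N : ℕ} (hN : 0 < N) :
    Finset.Ioo 0 (N + 1) = insert N (Finset.Ioo 0 N) := by
  ext x; simp only [Finset.mem_Ioo, Finset.mem_insert]; omega

lemma sum_Ioo_succ {N : ℕ} (hN : 0 < N) (F : ℕ → ℝ) :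
    ∑ m ∈ Finset.Ioo 0 (N + 1), F m = (∑ m ∈ Finset.Ioo 0 N, F m) + F N := by
  rw [Ioo_succ_eq hN, Finset.sum_insert (by simp)]; ring

lemma tri_swap (N : ℕ) (g : ℕ → ℕ → ℝ) :
    ∑ p ∈ Finset.Ioo 0 N, ∑ m ∈ Finset.Ioo 0 p, g p m
      = ∑ m ∈ Finset.Ioo 0 N, ∑ p ∈ Finset.Ioo m N, g p m := by
  have h1 : ∀ p ∈ Finset.Ioo 0 N, ∑ m ∈ Finset.Ioo 0 p, g p m
      = ∑ m ∈ Finset.Ioo 0 N, if m < p then g p m else 0 := by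
    intro p hp
    rw [← Finset.sum_filter]
    apply Finset.sum_congr _ (fun _ _ => rfl)
    ext m
    simp only [Finset.mem_Ioo, Finset.mem_filter] at *
    omega
  rw [Finset.sum_congr rfl h1, Finset.sum_comm]
  refine Finset.sum_congr rfl fun m hm => ?_
  rw [← Finset.sum_filter]
  apply Finset.sum_congr _ (fun _ _ => rfl)
  ext p
  simp only [Finset.mem_Ioo, Finset.mem_filter] at *
  omega

lemma shift_sum (m N : ℕ) (F : ℕ → ℝ) :
    ∑ a ∈ Finset.Ioo 0 (N - m), F a = ∑ p ∈ Finset.Ioo m N, F (p - m) := by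
  refine Finset.sum_nbij' (fun a => a + m) (fun p => p - m) ?_ ?_ ?_ ?_ ?_ <;>
      intro a ha <;> simp only [Finset.mem_Ioo] at *
  · omega
  · omega
  · omega
  · omega
  · congr 1; omega

lemma reflect_sum (N : ℕ) (F : ℕ → ℝ) :
    ∑ M ∈ Finset.Ioo 0 N, F (N - M) = ∑ d ∈ Finset.Ioo 0 N, F d := by
  refine Finset.sum_nbij' (fun M => N - M) (fun d => N - d) ?_ ?_ ?_ ?_ ?_ <;>
      intro a ha <;> simp only [Finset.mem_Ioo] at *
  all_goals omega

lemma fD_swap (s m N : ℕ) :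
    ∑ M ∈ Finset.Ioo m N, fDf q s N M = ∑ p ∈ Finset.Ioo 0 N, fDf q s p m := by
  have h0 : ∑ p ∈ Finset.Ioo 0 N, fDf q s p m = ∑ p ∈ Finset.Ioo m N, fDf q s p m := by
    symm
    apply Finset.sum_subset (Finset.Ioo_subset_Ioo (Nat.zero_le m) le_rfl)
    intro p hp hnp
    simp only [Finset.mem_Ioo] at hp hnp
    have : ¬ m < p := by omega
    simp [fDf, this]
  rw [h0]
  refine Finset.sum_nbij' (fun M => N + m - M) (fun p => N + m - p) ?_ ?_ ?_ ?_ ?_ <;>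
      intro a ha <;> simp only [Finset.mem_Ioo] at *
  · omega
  · omega
  · omega
  · omega
  · have h1 : a < N := ha.2
    have h2 : m < N + m - a := by omega
    simp only [fDf, if_pos h1, if_pos h2]
    have h3 : N + m - a - m = N - a := by omega
    rw [h3]

/-! ### The key kernel identity -/

lemma WSUM (hq0 : 0 < q) (hq1 : q < 1) :
    ∀ (t : ℕ) (h : ℕ → ℝ) (N : ℕ),
      (∑ i ∈ Finset.Icc 1 t, ZIf q i (Sff q (t + 1 - i) h) N) + ZIf q (t + 1) h N
        = ∑ m ∈ Finset.Ioo 0 N, Vf q (t + 1) m N * h m := by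
  intro t
  induction t with
  | zero =>
    intro h N
    rw [Finset.Icc_eq_empty (by omega), Finset.sum_empty, zero_add, ZIf_succ]
    refine Finset.sum_congr rfl fun m hm => ?_
    simp only [Finset.mem_Ioo] at hm
    rw [ZIf_zero]
    simp only [Vf, if_pos hm.2, Nat.add_sub_cancel, Zbf_zero, mul_one]
  | succ t IH =>
    intro h N
    have hmap : ∑ i ∈ Finset.Icc 1 (t + 1), ZIf q i (Sff q (t + 1 + 1 - i) h) N
        = ∑ j ∈ Finset.Icc 0 t, ZIf q (j + 1) (Sff q (t + 1 - j) h) N := by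
      refine Finset.sum_nbij' (fun i => i - 1) (fun j => j + 1) ?_ ?_ ?_ ?_ ?_ <;>
          intro a ha <;> simp only [Finset.mem_Icc] at *
      · omega
      · omega
      · omega
      · omega
      · have h1 : a - 1 + 1 = a := by omega
        have h2 : t + 1 - (a - 1) = t + 1 + 1 - a := by omega
        rw [h1, h2]
    have hsplit : Finset.Icc 0 t = insert 0 (Finset.Icc 1 t) := by
      ext x; simp only [Finset.mem_Icc, Finset.mem_insert]; omega
    have key : ∀ p ∈ Finset.Ioo 0 N,
        bW q p * Sff q (t + 1) h p
            + bW q p * ((∑ j ∈ Finset.Icc 1 t, ZIf q j (Sff q (t + 1 - j) h) p)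
                + ZIf q (t + 1) h p)
          = ∑ m ∈ Finset.Ioo 0 p, bW q p * ((fDf q (t + 1) p m + Vf q (t + 1) m p) * h m) := by
      intro p hp
      rw [IH h p]
      simp only [Sff]
      rw [Finset.mul_sum, Finset.mul_sum, ← Finset.sum_add_distrib]
      exact Finset.sum_congr rfl fun m hm => by ring
    calc (∑ i ∈ Finset.Icc 1 (t + 1), ZIf q i (Sff q (t + 1 + 1 - i) h) N)
          + ZIf q (t + 1 + 1) h N
        = ∑ p ∈ Finset.Ioo 0 N,
            (bW q p * Sff q (t + 1) h p
              + bW q p * ((∑ j ∈ Finset.Icc 1 t, ZIf q j (Sff q (t + 1 - j) h) p)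
                  + ZIf q (t + 1) h p)) := by
          rw [hmap, hsplit, Finset.sum_insert (by simp)]
          have e0 : ZIf q (0 + 1) (Sff q (t + 1 - 0) h) N
              = ∑ p ∈ Finset.Ioo 0 N, bW q p * Sff q (t + 1) h p := rfl
          have e1 : ∀ j ∈ Finset.Icc 1 t, ZIf q (j + 1) (Sff q (t + 1 - j) h) N
              = ∑ p ∈ Finset.Ioo 0 N, bW q p * ZIf q j (Sff q (t + 1 - j) h) p :=
            fun j _ => ZIf_succ j _ N
          have e2 : ZIf q (t + 1 + 1) h N
              = ∑ p ∈ Finset.Ioo 0 N, bW q p * ZIf q (t + 1) h p := ZIf_succ _ h N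
          rw [e0, Finset.sum_congr rfl e1, e2, Finset.sum_comm,
            ← Finset.sum_add_distrib, ← Finset.sum_add_distrib]
          refine Finset.sum_congr rfl fun p hp => ?_
          rw [mul_add, Finset.mul_sum]
          ring
      _ = ∑ p ∈ Finset.Ioo 0 N, ∑ m ∈ Finset.Ioo 0 p,
            bW q p * ((fDf q (t + 1) p m + Vf q (t + 1) m p) * h m) :=
          Finset.sum_congr rfl key
      _ = ∑ m ∈ Finset.Ioo 0 N, ∑ p ∈ Finset.Ioo m N,
            bW q p * ((fDf q (t + 1) p m + Vf q (t + 1) m p) * h m) := tri_swap N _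
      _ = ∑ m ∈ Finset.Ioo 0 N, Vf q (t + 1 + 1) m N * h m := by
          refine Finset.sum_congr rfl fun m hm => ?_
          simp only [Finset.mem_Ioo] at hm
          have hv : Vf q (t + 1 + 1) m N = bW q m * Zbf q (t + 1) (N - m) := by
            simp only [Vf, if_pos hm.2, Nat.add_sub_cancel]
          rw [hv, Zbf_succ, shift_sum m N (fun a => bW q a * Zbf q t a),
            Finset.mul_sum, Finset.sum_mul]
          refine Finset.sum_congr rfl fun p hp => ?_
          simp only [Finset.mem_Ioo] at hp
          simp only [fDf, Vf, if_pos hp.1, Nat.add_sub_cancel]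
          have hid := ID3 hq0 hq1 (d := p - m) (m := m) (by omega) hm.1
          rw [show p - m + m = p from by omega] at hid
          linear_combination (-(Zbf q t (p - m)) * h m) * hid

lemma KERN (hq0 : 0 < q) (hq1 : q < 1) (u : Bool) (t : ℕ) (h : ℕ → ℝ) :
    ∀ N : ℕ,
      ∑ m ∈ Finset.Ioo 0 N, (∑ p ∈ Finset.Ioo 0 N, fDf q (t + 1) p m) * (JBf q u m * h m)
        = ∑ M ∈ Finset.Ioo 0 N, JBf q u M * Sff q (t + 1) h M
          + ∑ i ∈ Finset.Icc 1 t, ∑ n ∈ Finset.Ioo 0 N,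
              xW q n * ZIf q i (Sff q (t + 1 - i) h) n
          + ∑ n ∈ Finset.Ioo 0 N, xW q n * ZIf q (t + 1) h n := by
  intro N
  induction N with
  | zero => simp
  | succ N IHN =>
    rcases Nat.eq_zero_or_pos N with rfl | hN
    · have h01 : Finset.Ioo 0 1 = (∅ : Finset ℕ) := by
        ext x; simp only [Finset.mem_Ioo, Finset.notMem_empty, iff_false]; omega
      simp [h01]
    · have hLHS : (∑ m ∈ Finset.Ioo 0 (N + 1),
            (∑ p ∈ Finset.Ioo 0 (N + 1), fDf q (t + 1) p m) * (JBf q u m * h m))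
          = (∑ m ∈ Finset.Ioo 0 N,
              (∑ p ∈ Finset.Ioo 0 N, fDf q (t + 1) p m) * (JBf q u m * h m))
            + ∑ m ∈ Finset.Ioo 0 N, fDf q (t + 1) N m * (JBf q u m * h m) := by
        rw [sum_Ioo_succ hN]
        have hzero : (∑ p ∈ Finset.Ioo 0 (N + 1), fDf q (t + 1) p N) * (JBf q u N * h N)
            = 0 := by
          rw [Finset.sum_eq_zero, zero_mul]
          intro p hp
          simp only [Finset.mem_Ioo] at hp
          exact if_neg (by omega)
        rw [hzero, add_zero, ← Finset.sum_add_distrib]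
        refine Finset.sum_congr rfl fun m hm => ?_
        rw [sum_Ioo_succ hN, add_mul]
      have hδ : ∑ m ∈ Finset.Ioo 0 N, fDf q (t + 1) N m * (JBf q u m * h m)
          = JBf q u N * Sff q (t + 1) h N
            + xW q N * ((∑ i ∈ Finset.Icc 1 t, ZIf q i (Sff q (t + 1 - i) h) N)
                + ZIf q (t + 1) h N) := by
        rw [WSUM hq0 hq1 t h N]
        simp only [Sff]
        rw [Finset.mul_sum, Finset.mul_sum, ← Finset.sum_add_distrib]
        refine Finset.sum_congr rfl fun m hm => ?_
        simp only [Finset.mem_Ioo] at hm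
        have hkey := keyID hq0 hq1 u (d := N - m) (m := m) (by omega) hm.1
        rw [show N - m + m = N from by omega] at hkey
        simp only [fDf, Vf, if_pos hm.2, Nat.add_sub_cancel]
        linear_combination (Zbf q t (N - m) * h m) * hkey
      have hR1 : ∑ M ∈ Finset.Ioo 0 (N + 1), JBf q u M * Sff q (t + 1) h M
          = ∑ M ∈ Finset.Ioo 0 N, JBf q u M * Sff q (t + 1) h M
            + JBf q u N * Sff q (t + 1) h N := sum_Ioo_succ hN _
      have hR2 : ∑ i ∈ Finset.Icc 1 t, ∑ n ∈ Finset.Ioo 0 (N + 1),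
              xW q n * ZIf q i (Sff q (t + 1 - i) h) n
          = ∑ i ∈ Finset.Icc 1 t, ∑ n ∈ Finset.Ioo 0 N,
              xW q n * ZIf q i (Sff q (t + 1 - i) h) n
            + ∑ i ∈ Finset.Icc 1 t, xW q N * ZIf q i (Sff q (t + 1 - i) h) N := by
        rw [← Finset.sum_add_distrib]
        exact Finset.sum_congr rfl fun i _ => sum_Ioo_succ hN _
      have hR3 : ∑ n ∈ Finset.Ioo 0 (N + 1), xW q n * ZIf q (t + 1) h n
          = ∑ n ∈ Finset.Ioo 0 N, xW q n * ZIf q (t + 1) h n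
            + xW q N * ZIf q (t + 1) h N := sum_Ioo_succ hN _
      rw [hLHS, IHN, hδ, hR1, hR2, hR3, mul_add, Finset.mul_sum]
      ring

/-! ### The linear extension to 𝔡₁ -/

noncomputable def AD1 (q : ℝ) (x : DOne) (N : ℕ) : ℝ :=
  Finsupp.sum x.coeff fun w a => (a : ℝ) * SDf q (FreeMonoid.toList w) N

lemma AD1_zero (N : ℕ) : AD1 q (0 : DOne) N = 0 := Finsupp.sum_zero_index

lemma AD1_add (x y : DOne) (N : ℕ) : AD1 q (x + y) N = AD1 q x N + AD1 q y N := by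
  unfold AD1; rw [MonoidAlgebra.coeff_add]; exact Finsupp.sum_add_index' (fun w => by simp) (fun w b c => by push_cast; ring)

lemma AD1_single (w : FreeMonoid Bool) (a : ℤ) (N : ℕ) :
    AD1 q (MonoidAlgebra.single w a) N = (a : ℝ) * SDf q (FreeMonoid.toList w) N :=
  by unfold AD1; rw [MonoidAlgebra.coeff_single]; exact Finsupp.sum_single_index (by simp)

lemma AD1_smul (a : ℤ) (x : DOne) (N : ℕ) : AD1 q (a • x) N = (a : ℝ) * AD1 q x N := by
  unfold AD1
  rw [MonoidAlgebra.coeff_smul, Finsupp.sum_smul_index' (fun i => by simp), Finsupp.mul_sum]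
  exact Finsupp.sum_congr fun w _ => by
    rw [smul_eq_mul]; push_cast; ring

lemma AD1_finset_sum {ι : Type*} (F : Finset ι) (g : ι → DOne) (N : ℕ) :
    AD1 q (∑ i ∈ F, g i) N = ∑ i ∈ F, AD1 q (g i) N := by
  induction F using Finset.cons_induction with
  | empty => simp [AD1_zero]
  | cons a s ha IH => rw [Finset.sum_cons, AD1_add, IH, Finset.sum_cons]

lemma AD1_mul_of (u : Bool) (x : DOne) (N : ℕ) :
    AD1 q (MonoidAlgebra.single (FreeMonoid.of u) 1 * x) N
      = ∑ m ∈ Finset.Ioo 0 N, JBf q u m * AD1 q x m := by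
  induction x using MonoidAlgebra.induction_linear generalizing N with
  | zero => simp [AD1_zero]
  | add f g hf hg =>
      rw [mul_add, AD1_add, hf, hg, ← Finset.sum_add_distrib]
      exact Finset.sum_congr rfl fun m _ => by rw [AD1_add]; ring
  | single w a =>
      have h1 : (MonoidAlgebra.single (FreeMonoid.of u) 1 : DOne) * MonoidAlgebra.single w a
          = MonoidAlgebra.single (FreeMonoid.of u * w) a := by
        rw [MonoidAlgebra.single_mul_single, one_mul]
      rw [h1, AD1_single, FreeMonoid.toList_of_mul, SDf_cons, Finset.mul_sum]
      refine Finset.sum_congr rfl fun m _ => ?_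
      rw [AD1_single]
      ring

lemma AD1_zO_mul (x : DOne) (N : ℕ) :
    AD1 q (zO * x) N = ∑ m ∈ Finset.Ioo 0 N, bW q m * AD1 q x m :=
  AD1_mul_of false x N

lemma AD1_xiO_mul (x : DOne) (N : ℕ) :
    AD1 q (xiO * x) N = ∑ m ∈ Finset.Ioo 0 N, xW q m * AD1 q x m :=
  AD1_mul_of true x N

lemma AD1_zO_pow (i : ℕ) (x : DOne) : ∀ N : ℕ,
    AD1 q (zO ^ i * x) N = ZIf q i (fun p => AD1 q x p) N := by
  induction i with
  | zero => intro N; rw [pow_zero, one_mul]; rfl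
  | succ i IH =>
      intro N
      rw [pow_succ', mul_assoc, AD1_zO_mul, ZIf_succ]
      exact Finset.sum_congr rfl fun p _ => by rw [IH p]

lemma phiW_zero_eq : ∀ L : List Bool,
    phiW 0 L = MonoidAlgebra.single (FreeMonoid.ofList L) 1 := by
  intro L
  induction L with
  | nil =>
      have h1 : phiW 0 ([] : List Bool) = 1 := by simp [phiW]
      rw [h1]
      exact MonoidAlgebra.one_def
  | cons u L IH =>
      cases u
      · simp only [phiW]
        rw [Finset.Icc_eq_empty (by omega), Finset.sum_empty, add_zero, IH]
        have : (MonoidAlgebra.single (FreeMonoid.of false) 1 : DOne)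
            * MonoidAlgebra.single (FreeMonoid.ofList L) 1
            = MonoidAlgebra.single (FreeMonoid.of false * FreeMonoid.ofList L) 1 := by
          rw [MonoidAlgebra.single_mul_single, one_mul]
        exact this
      · simp only [phiW]
        rw [Finset.sum_range_one, pow_zero, mul_one, Nat.zero_sub, IH]
        have : (MonoidAlgebra.single (FreeMonoid.of true) 1 : DOne)
            * MonoidAlgebra.single (FreeMonoid.ofList L) 1
            = MonoidAlgebra.single (FreeMonoid.of true * FreeMonoid.ofList L) 1 := by
          rw [MonoidAlgebra.single_mul_single, one_mul]
        exact this

/-! ### The main lemma in the recursive world -/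

lemma ML (hq0 : 0 < q) (hq1 : q < 1) (L : List Bool) : ∀ (t N : ℕ),
    ∑ M ∈ Finset.Ioo 0 N, fDf q (t + 1) N M * SDf q L M = AD1 q (phiW (t + 1) L) N := by
  induction L with
  | nil =>
      intro t N
      have hphi : phiW (t + 1) [] = MonoidAlgebra.single
          (FreeMonoid.ofList (true :: List.replicate t false)) 1 := by
        simp only [phiW]
        rw [if_neg (by omega), Nat.add_sub_cancel]
      rw [hphi, AD1_single, FreeMonoid.toList_ofList, Int.cast_one, one_mul, SDf_cons]
      calc ∑ M ∈ Finset.Ioo 0 N, fDf q (t + 1) N M * SDf q [] M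
          = ∑ M ∈ Finset.Ioo 0 N, xW q (N - M) * Zbf q t (N - M) := by
            refine Finset.sum_congr rfl fun M hM => ?_
            simp only [Finset.mem_Ioo] at hM
            simp only [fDf, if_pos hM.2, Nat.add_sub_cancel, SDf_nil, mul_one]
        _ = ∑ d ∈ Finset.Ioo 0 N, xW q d * Zbf q t d :=
            reflect_sum N (fun d => xW q d * Zbf q t d)
        _ = ∑ m ∈ Finset.Ioo 0 N, JBf q true m * SDf q (List.replicate t false) m := rfl
  | cons u L IH =>
      intro t N
      have hstep : ∑ M ∈ Finset.Ioo 0 N, fDf q (t + 1) N M * SDf q (u :: L) M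
          = ∑ m ∈ Finset.Ioo 0 N,
              (∑ p ∈ Finset.Ioo 0 N, fDf q (t + 1) p m) * (JBf q u m * SDf q L m) := by
        have e1 : ∀ M ∈ Finset.Ioo 0 N, fDf q (t + 1) N M * SDf q (u :: L) M
            = ∑ m ∈ Finset.Ioo 0 M, fDf q (t + 1) N M * (JBf q u m * SDf q L m) := by
          intro M _
          rw [SDf_cons, Finset.mul_sum]
        rw [Finset.sum_congr rfl e1, tri_swap]
        refine Finset.sum_congr rfl fun m _ => ?_
        rw [← Finset.sum_mul, fD_swap]
      rw [hstep, KERN hq0 hq1 u t (SDf q L) N]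
      have hfirstF : ∀ M ∈ Finset.Ioo 0 N,
          bW q M * AD1 q (phiW (t + 1) L) M
            = JBf q false M * Sff q (t + 1) (SDf q L) M :=
        fun M _ => by rw [← IH t M]; rfl
      have hlastf : (fun p => AD1 q (MonoidAlgebra.single (FreeMonoid.ofList L) 1) p)
          = SDf q L := by
        funext p
        rw [AD1_single, FreeMonoid.toList_ofList, Int.cast_one, one_mul]
      have hmid : ∀ i ∈ Finset.Icc 1 t,
          AD1 q (xiO * zO ^ i * phiW (t + 1 - i) L) N
            = ∑ n ∈ Finset.Ioo 0 N, xW q n * ZIf q i (Sff q (t + 1 - i) (SDf q L)) n := by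
        intro i hi
        simp only [Finset.mem_Icc] at hi
        rw [mul_assoc, AD1_xiO_mul]
        refine Finset.sum_congr rfl fun n _ => ?_
        rw [AD1_zO_pow]
        have hfun : (fun p => AD1 q (phiW (t + 1 - i) L) p)
            = Sff q (t + 1 - i) (SDf q L) := by
          funext p
          have harith : t + 1 - i = (t - i) + 1 := by omega
          rw [harith]
          exact (IH (t - i) p).symm
        rw [hfun]
      have hlast : AD1 q (xiO * zO ^ (t + 1) * phiW (t + 1 - (t + 1)) L) N
          = ∑ n ∈ Finset.Ioo 0 N, xW q n * ZIf q (t + 1) (SDf q L) n := by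
        rw [Nat.sub_self, mul_assoc, AD1_xiO_mul]
        refine Finset.sum_congr rfl fun n _ => ?_
        rw [AD1_zO_pow, phiW_zero_eq, hlastf]
      cases u
      · -- z₁-case
        have hphi : phiW (t + 1) (false :: L)
            = zO * phiW (t + 1) L
              + ∑ i ∈ Finset.Icc 1 (t + 1), xiO * zO ^ i * phiW (t + 1 - i) L := by
          simp only [phiW]
        rw [hphi, AD1_add, AD1_zO_mul, AD1_finset_sum]
        have hins : Finset.Icc 1 (t + 1) = insert (t + 1) (Finset.Icc 1 t) := by
          ext x; simp only [Finset.mem_Icc, Finset.mem_insert]; omega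
        rw [hins, Finset.sum_insert (by simp), hlast, Finset.sum_congr rfl hmid,
          Finset.sum_congr rfl hfirstF]
        ring
      · -- ξ₁-case
        have hphi : phiW (t + 1) (true :: L)
            = ∑ i ∈ Finset.range (t + 1 + 1), xiO * zO ^ i * phiW (t + 1 - i) L := by
          simp only [phiW]
        rw [hphi, AD1_finset_sum]
        have hr : Finset.range (t + 1 + 1) = insert 0 (insert (t + 1) (Finset.Icc 1 t)) := by
          ext x; simp only [Finset.mem_range, Finset.mem_insert, Finset.mem_Icc]; omega
        have h0notin : (0 : ℕ) ∉ insert (t + 1) (Finset.Icc 1 t) := by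
          simp only [Finset.mem_insert, Finset.mem_Icc]; omega
        rw [hr, Finset.sum_insert h0notin, Finset.sum_insert (by simp), hlast,
          Finset.sum_congr rfl hmid]
        have h0term : AD1 q (xiO * zO ^ 0 * phiW (t + 1 - 0) L) N
            = ∑ n ∈ Finset.Ioo 0 N, JBf q true n * Sff q (t + 1) (SDf q L) n := by
          rw [pow_zero, mul_one, Nat.sub_zero, AD1_xiO_mul]
          refine Finset.sum_congr rfl fun n _ => ?_
          rw [show AD1 q (phiW (t + 1) L) n = Sff q (t + 1) (SDf q L) n from (IH t n).symm]
          rfl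
        rw [h0term]
        ring

/-! ### Bridges between tuple sums and the recursive world -/

lemma tuple0 {P : (Fin 0 → ℕ) → Prop} [DecidablePred P] (S : Finset ℕ)
    (hP : ∀ f, P f) (F : (Fin 0 → ℕ) → ℝ) (hF : ∀ f, F f = 1) :
    ∑ m ∈ (Fintype.piFinset fun _ : Fin 0 => S).filter P, F m = 1 := by
  rw [Finset.filter_true_of_mem (fun x _ => hP x),
    Finset.sum_congr rfl (fun x _ => hF x), Finset.sum_const]
  simp [Fintype.card_piFinset]

lemma GEN {r : ℕ} (G : Fin (r + 1) → ℕ → ℝ) (hi : ℕ) :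
    ∑ m ∈ (Fintype.piFinset fun _ : Fin (r + 1) => Finset.Ioo 0 hi).filter
        (fun m => ∀ i j, i < j → m j < m i),
      ∏ j, G j (m j)
    = ∑ m0 ∈ Finset.Ioo 0 hi, G 0 m0 *
        ∑ tl ∈ (Fintype.piFinset fun _ : Fin r => Finset.Ioo 0 m0).filter
            (fun m => ∀ i j, i < j → m j < m i),
          ∏ j, G j.succ (tl j) := by
  have hr : (∑ m0 ∈ Finset.Ioo 0 hi, G 0 m0 *
        ∑ tl ∈ (Fintype.piFinset fun _ : Fin r => Finset.Ioo 0 m0).filter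
            (fun m => ∀ i j, i < j → m j < m i),
          ∏ j, G j.succ (tl j))
      = ∑ x ∈ (Finset.Ioo 0 hi).sigma
          (fun m0 => (Fintype.piFinset fun _ : Fin r => Finset.Ioo 0 m0).filter
            (fun m => ∀ i j, i < j → m j < m i)),
          G 0 x.1 * ∏ j, G j.succ (x.2 j) := by
    rw [Finset.sum_congr rfl (fun m0 _ => Finset.mul_sum _ _ _)]
    exact Finset.sum_sigma' _ _ _
  rw [hr]
  refine Finset.sum_bij' (i := fun m _ => (⟨m 0, Fin.tail m⟩ : Σ _ : ℕ, (Fin r → ℕ)))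
    (j := fun x _ => Fin.cons x.1 x.2) ?_ ?_ ?_ ?_ ?_
  · intro m hm
    rw [Finset.mem_filter, Fintype.mem_piFinset] at hm
    rw [Finset.mem_sigma, Finset.mem_filter, Fintype.mem_piFinset]
    refine ⟨hm.1 0, fun j => ?_, fun i j hij => hm.2 i.succ j.succ (Fin.succ_lt_succ_iff.mpr hij)⟩
    have h1 := hm.1 j.succ
    have h2 := hm.2 0 j.succ (Fin.succ_pos j)
    rw [Finset.mem_Ioo] at h1 ⊢
    exact ⟨h1.1, h2⟩
  · intro x hx
    rw [Finset.mem_sigma, Finset.mem_filter, Fintype.mem_piFinset] at hx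
    rw [Finset.mem_filter, Fintype.mem_piFinset]
    obtain ⟨hx1, hx2mem, hx2dec⟩ := hx
    rw [Finset.mem_Ioo] at hx1
    constructor
    · intro j
      rcases Fin.eq_zero_or_eq_succ j with rfl | ⟨k, rfl⟩
      · rw [Fin.cons_zero, Finset.mem_Ioo]; exact hx1
      · rw [Fin.cons_succ]
        have := hx2mem k
        rw [Finset.mem_Ioo] at this ⊢
        exact ⟨this.1, lt_trans this.2 hx1.2⟩
    · intro i j hij
      rcases Fin.eq_zero_or_eq_succ j with rfl | ⟨j', rfl⟩
      · exact absurd hij (Fin.not_lt_zero i)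
      · rcases Fin.eq_zero_or_eq_succ i with rfl | ⟨i', rfl⟩
        · rw [Fin.cons_zero, Fin.cons_succ]
          have := hx2mem j'
          rw [Finset.mem_Ioo] at this
          exact this.2
        · rw [Fin.cons_succ, Fin.cons_succ]
          exact hx2dec i' j' (Fin.succ_lt_succ_iff.mp hij)
  · intro m _; dsimp only; exact Fin.cons_self_tail m
  · intro x _
    simp
  · intro m _; dsimp only; exact Fin.prod_univ_succ _


lemma GEN2 {r : ℕ} (G : Fin (r + 1) → ℕ → ℝ) {M N : ℕ} (hMN : M < N) :
    ∑ k ∈ (Fintype.piFinset fun _ : Fin (r + 1) => Finset.Ioc M N).filter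
        (fun k => (∀ i j, i < j → k j < k i) ∧ ∀ h : (0:ℕ) < r + 1, k ⟨0, h⟩ = N),
      ∏ j, G j (k j)
    = G 0 N * ∑ tl ∈ (Fintype.piFinset fun _ : Fin r => Finset.Ioo M N).filter
        (fun m => ∀ i j, i < j → m j < m i),
      ∏ j, G j.succ (tl j) := by
  rw [Finset.mul_sum]
  refine Finset.sum_bij' (i := fun k _ => Fin.tail k) (j := fun tl _ => Fin.cons N tl)
    ?_ ?_ ?_ ?_ ?_
  · intro k hk
    rw [Finset.mem_filter, Fintype.mem_piFinset] at hk
    rw [Finset.mem_filter, Fintype.mem_piFinset]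
    obtain ⟨hmem, hdec, hpin⟩ := hk
    have hk0 : k 0 = N := hpin (Nat.succ_pos r)
    refine ⟨fun j => ?_, fun i j hij => hdec i.succ j.succ (Fin.succ_lt_succ_iff.mpr hij)⟩
    have h1 := hmem j.succ
    have h2 := hdec 0 j.succ (Fin.succ_pos j)
    rw [Finset.mem_Ioc] at h1
    rw [Finset.mem_Ioo]
    rw [hk0] at h2
    exact ⟨h1.1, h2⟩
  · intro tl htl
    rw [Finset.mem_filter, Fintype.mem_piFinset] at htl
    rw [Finset.mem_filter, Fintype.mem_piFinset]
    obtain ⟨hmem, hdec⟩ := htl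
    refine ⟨fun j => ?_, fun i j hij => ?_, fun h => ?_⟩
    · rcases Fin.eq_zero_or_eq_succ j with rfl | ⟨k, rfl⟩
      · rw [Fin.cons_zero, Finset.mem_Ioc]; omega
      · rw [Fin.cons_succ]
        have := hmem k
        rw [Finset.mem_Ioo] at this
        rw [Finset.mem_Ioc]
        exact ⟨this.1, le_of_lt this.2⟩
    · rcases Fin.eq_zero_or_eq_succ j with rfl | ⟨j', rfl⟩
      · exact absurd hij (Fin.not_lt_zero i)
      · rcases Fin.eq_zero_or_eq_succ i with rfl | ⟨i', rfl⟩
        · rw [Fin.cons_zero, Fin.cons_succ]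
          have := hmem j'
          rw [Finset.mem_Ioo] at this
          exact this.2
        · rw [Fin.cons_succ, Fin.cons_succ]
          exact hdec i' j' (Fin.succ_lt_succ_iff.mp hij)
    · have h0 : (⟨0, h⟩ : Fin (r + 1)) = (0 : Fin (r + 1)) := by
        apply Fin.ext; simp
      rw [h0]
      exact Fin.cons_zero (α := fun _ => ℕ) N tl
  · intro k hk
    rw [Finset.mem_filter] at hk
    have hk0 : k 0 = N := hk.2.2 (Nat.succ_pos r)
    have h2 := Fin.cons_self_tail k
    rw [hk0] at h2
    exact h2
  · intro tl _
    exact Fin.tail_cons (α := fun _ => ℕ) N tl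
  · intro k hk
    rw [Finset.mem_filter] at hk
    have hk0 : k 0 = N := hk.2.2 (Nat.succ_pos r)
    rw [Fin.prod_univ_succ, hk0]
    rfl

lemma GENshift {r : ℕ} (G : Fin r → ℕ → ℝ) (M N : ℕ) :
    ∑ tl ∈ (Fintype.piFinset fun _ : Fin r => Finset.Ioo M N).filter
        (fun m => ∀ i j, i < j → m j < m i),
      ∏ j, G j (tl j - M)
    = ∑ a ∈ (Fintype.piFinset fun _ : Fin r => Finset.Ioo 0 (N - M)).filter
        (fun m => ∀ i j, i < j → m j < m i),
      ∏ j, G j (a j) := by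
  refine Finset.sum_bij' (i := fun tl _ => fun j => tl j - M)
    (j := fun a _ => fun j => a j + M) ?_ ?_ ?_ ?_ ?_
  · intro tl htl
    rw [Finset.mem_filter, Fintype.mem_piFinset] at htl
    rw [Finset.mem_filter, Fintype.mem_piFinset]
    obtain ⟨hmem, hdec⟩ := htl
    refine ⟨fun j => ?_, fun i j hij => ?_⟩
    · have := hmem j; rw [Finset.mem_Ioo] at *; omega
    · show tl j - M < tl i - M
      have h1 := hmem i; have h2 := hmem j; have h3 := hdec i j hij
      rw [Finset.mem_Ioo] at h1 h2; omega
  · intro a ha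
    rw [Finset.mem_filter, Fintype.mem_piFinset] at ha
    rw [Finset.mem_filter, Fintype.mem_piFinset]
    obtain ⟨hmem, hdec⟩ := ha
    refine ⟨fun j => ?_, fun i j hij => ?_⟩
    · have := hmem j; rw [Finset.mem_Ioo] at *; omega
    · show a j + M < a i + M
      have h1 := hmem i; have h2 := hmem j; have h3 := hdec i j hij
      rw [Finset.mem_Ioo] at h1 h2; omega
  · intro tl htl
    rw [Finset.mem_filter, Fintype.mem_piFinset] at htl
    funext j
    have := htl.1 j
    rw [Finset.mem_Ioo] at this
    dsimp only
    omega
  · intro a ha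
    rw [Finset.mem_filter, Fintype.mem_piFinset] at ha
    funext j
    have := ha.1 j
    rw [Finset.mem_Ioo] at this
    dsimp only
    omega
  · intro tl _; rfl

lemma Zb_tuple (r : ℕ) : ∀ D : ℕ,
    ∑ a ∈ (Fintype.piFinset fun _ : Fin r => Finset.Ioo 0 D).filter
        (fun m => ∀ i j, i < j → m j < m i),
      ∏ j, bW q (a j)
    = Zbf q r D := by
  induction r with
  | zero =>
      intro D
      rw [Zbf_zero]
      exact tuple0 _ (fun f i => i.elim0) _ (fun f => by simp)
  | succ r IH =>
      intro D
      rw [GEN (fun _ => bW q) D, Zbf_succ]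
      exact Finset.sum_congr rfl fun m0 _ => by rw [IH m0]

lemma AW_nil (M : ℕ) : AW q [] M = 1 := by
  simp only [AW]
  exact tuple0 _ (fun f i => i.elim0) _ (fun f => by simp)

lemma AW_cons (u : Letter) (w : List Letter) (M : ℕ) :
    AW q (u :: w) M = ∑ m ∈ Finset.Ioo 0 M, Jlet q u m * AW q w m :=
  GEN (r := w.length) (fun j => Jlet q ((u :: w).get j)) M

lemma Jlet_if (u : Bool) (m : ℕ) :
    Jlet q (if u then Sum.inr 1 else Sum.inl 1) m = JBf q u m := by
  cases u
  · simp [Jlet, JBf, bW]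
  · simp [Jlet, JBf, xW]

lemma AW_map_eq (w : List Bool) : ∀ M : ℕ,
    AW q (w.map fun b => if b then Sum.inr 1 else Sum.inl 1) M = SDf q w M := by
  induction w with
  | nil => intro M; exact AW_nil M
  | cons u w IH =>
      intro M
      have h1 : AW q ((u :: w).map fun b => if b then Sum.inr 1 else Sum.inl 1) M
          = AW q ((if u then Sum.inr 1 else Sum.inl 1)
              :: (w.map fun b => if b then Sum.inr 1 else Sum.inl 1)) M := rfl
      rw [h1, AW_cons, SDf_cons]
      refine Finset.sum_congr rfl fun m _ => ?_
      rw [IH m, Jlet_if]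

lemma Amap_eq (x : DOne) (M : ℕ) : Amap q (toD1 x) M = AD1 q x M := by
  unfold Amap toD1 AD1
  rw [MonoidAlgebra.coeff_ofCoeff, Finsupp.sum_mapDomain_index (fun b => by simp) (fun b m1 m2 => by push_cast; ring)]
  refine Finsupp.sum_congr fun w _ => ?_
  congr 1
  exact AW_map_eq (FreeMonoid.toList w) M

lemma fS_eq (t N M : ℕ) : fS q (t + 1) N M = fDf q (t + 1) N M := by
  by_cases hMN : M < N
  · unfold fS
    refine Eq.trans (GEN2 (r := t) (fun j v =>
        (if (j : ℕ) = 0 then q ^ (v - M) else 1) / qint q (v - M)) hMN) ?_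
    have h2 : ∀ tl : Fin t → ℕ, (∏ j : Fin t,
        (if ((j.succ : Fin (t + 1)) : ℕ) = 0 then q ^ (tl j - M) else 1) / qint q (tl j - M))
        = ∏ j : Fin t, bW q (tl j - M) := by
      intro tl
      refine Finset.prod_congr rfl fun j _ => ?_
      rw [Fin.val_succ, if_neg (Nat.succ_ne_zero _)]
      rfl
    rw [Finset.sum_congr rfl (fun tl _ => h2 tl), GENshift (fun _ => bW q) M N,
      Zb_tuple t (N - M)]
    simp only [fDf, if_pos hMN, Nat.add_sub_cancel]
    norm_num [xW]
  · have hempty : (Fintype.piFinset fun _ : Fin (t + 1) => Finset.Ioc M N).filter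
        (fun k => (∀ i j, i < j → k j < k i) ∧ ∀ h : (0:ℕ) < t + 1, k ⟨0, h⟩ = N) = ∅ := by
      apply Finset.eq_empty_of_forall_notMem
      intro k hk
      rw [Finset.mem_filter, Fintype.mem_piFinset] at hk
      have h1 := hk.1 ⟨0, Nat.succ_pos t⟩
      rw [Finset.mem_Ioc] at h1
      omega
    rw [show fS q (t + 1) N M = 0 from by rw [fS, hempty, Finset.sum_empty]]
    rw [fDf, if_neg hMN]

/-! ### The main lemma, linearly extended -/

lemma ML_all (hq0 : 0 < q) (hq1 : q < 1) (t : ℕ) (x : DOne) (N : ℕ) :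
    ∑ M ∈ Finset.Ioo 0 N, fDf q (t + 1) N M * AD1 q x M = AD1 q (phi (t + 1) x) N := by
  induction x using MonoidAlgebra.induction_linear with
  | zero =>
      have h1 : phi (t + 1) (0 : DOne) = 0 := Finsupp.sum_zero_index
      rw [h1, AD1_zero]
      refine Finset.sum_eq_zero fun M _ => ?_
      rw [AD1_zero, mul_zero]
  | add f g hf hg =>
      have h1 : phi (t + 1) (f + g) = phi (t + 1) f + phi (t + 1) g :=
        by
          unfold phi; rw [MonoidAlgebra.coeff_add]
          exact Finsupp.sum_add_index' (fun a => zero_smul _ _) (fun a b c => add_smul b c _)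
      rw [h1, AD1_add, ← hf, ← hg, ← Finset.sum_add_distrib]
      exact Finset.sum_congr rfl fun M _ => by rw [AD1_add]; ring
  | single w a =>
      have h1 : phi (t + 1) (MonoidAlgebra.single w a)
          = a • phiW (t + 1) (FreeMonoid.toList w) :=
by
          unfold phi; rw [MonoidAlgebra.coeff_single]; exact Finsupp.sum_single_index (zero_smul _ _)
      rw [h1, AD1_smul, ← ML hq0 hq1 (FreeMonoid.toList w) t N, Finset.mul_sum]
      refine Finset.sum_congr rfl fun M _ => ?_
      rw [AD1_single]
      ring

end FFC


/-- For every `w ∈ 𝔡₁` and all positive integers `s`, `s'` and `N`,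
`Σ_{N>M_1>M_2>0} f_{s'}(N,M_1) f_s(M_1,M_2) A_w(M_2) = Σ_{N>M>0} f_{s'}(N,M) A_{φ_s(w)}(M)`. -/
theorem ff_contraction (q : ℝ) (hq0 : 0 < q) (hq1 : q < 1) (w : DOne)
    (s s' N : ℕ) (hs : 0 < s) (hs' : 0 < s') (hN : 0 < N) :
    (∑ M1 ∈ Finset.Ioo 0 N, ∑ M2 ∈ Finset.Ioo 0 M1,
        fS q s' N M1 * fS q s M1 M2 * Amap q (toD1 w) M2) =
      ∑ M ∈ Finset.Ioo 0 N, fS q s' N M * Amap q (toD1 (phi s w)) M := by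
  obtain ⟨t, rfl⟩ : ∃ t, s = t + 1 := ⟨s - 1, by omega⟩
  have key : ∀ M1 : ℕ,
      (∑ M2 ∈ Finset.Ioo 0 M1, fS q (t + 1) M1 M2 * Amap q (toD1 w) M2)
        = Amap q (toD1 (phi (t + 1) w)) M1 := by
    intro M1
    rw [FFC.Amap_eq (phi (t + 1) w) M1, ← FFC.ML_all hq0 hq1 t w M1]
    exact Finset.sum_congr rfl fun M2 _ => by
      rw [FFC.fS_eq, FFC.Amap_eq]
  calc (∑ M1 ∈ Finset.Ioo 0 N, ∑ M2 ∈ Finset.Ioo 0 M1,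
          fS q s' N M1 * fS q (t + 1) M1 M2 * Amap q (toD1 w) M2)
      = ∑ M1 ∈ Finset.Ioo 0 N, fS q s' N M1 *
          ∑ M2 ∈ Finset.Ioo 0 M1, fS q (t + 1) M1 M2 * Amap q (toD1 w) M2 := by
        refine Finset.sum_congr rfl fun M1 _ => ?_
        rw [Finset.mul_sum]
        exact Finset.sum_congr rfl fun M2 _ => by ring
    _ = ∑ M ∈ Finset.Ioo 0 N, fS q s' N M * Amap q (toD1 (phi (t + 1) w)) M :=
        Finset.sum_congr rfl fun M1 _ => by rw [key M1]

end
end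

section
/- For every integer k ≥ 1, one has d(ξ_1^k) = Σ_{r=1}^{k} Σ_{c∈I(r,k)} ξ_{c_1}···ξ_{c_r}, where the inner sum is over all multi-indices c = (c_1,...,c_r) of positive integers with c_1+...+c_r = k. -/
open scoped BigOperators

noncomputable section

attribute [local instance 10] Classical.propDecidable

lemma word_mul (l m : List ℕ+) :
    (MonoidAlgebra.single (FreeMonoid.ofList l) 1 : DXi) *
      MonoidAlgebra.single (FreeMonoid.ofList m) 1 =
      MonoidAlgebra.single (FreeMonoid.ofList (l ++ m)) 1 := by
  rw [MonoidAlgebra.single_mul_single, one_mul]; rfl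

lemma one_eq_word : (1 : DXi) = MonoidAlgebra.single (FreeMonoid.ofList []) 1 := rfl

lemma xiX_eq_word (k : ℕ+) : xiX k = MonoidAlgebra.single (FreeMonoid.ofList [k]) 1 := rfl

lemma xiX_one_pow (k : ℕ) :
    (xiX 1 : DXi) ^ k = MonoidAlgebra.single (FreeMonoid.ofList (List.replicate k 1)) 1 := by
  induction k with
  | zero => rfl
  | succ n ih =>
    rw [pow_succ', ih, xiX_eq_word, word_mul]
    rfl

lemma circ_single (k : ℕ+) (l : List ℕ+) :
    circ k (MonoidAlgebra.single (FreeMonoid.ofList l) 1) = circW k l := by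
  unfold circ
  rw [MonoidAlgebra.coeff_single, Finsupp.sum_single_index (by simp)]
  simp

lemma dmap_single (l : List ℕ+) :
    dmap (MonoidAlgebra.single (FreeMonoid.ofList l) 1) = dW l := by
  unfold dmap
  rw [MonoidAlgebra.coeff_single, Finsupp.sum_single_index (by simp)]
  simp
lemma circ_add (k : ℕ+) (x y : DXi) : circ k (x + y) = circ k x + circ k y := by
  unfold circ
  rw [MonoidAlgebra.coeff_add]
  exact Finsupp.sum_add_index' (by simp) (fun w a b => add_smul a b _)

lemma circ_sum {α : Type*} (k : ℕ+) (s : Finset α) (f : α → DXi) :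
    circ k (∑ a ∈ s, f a) = ∑ a ∈ s, circ k (f a) := by
  classical
  induction s using Finset.induction with
  | empty => simp [circ]
  | insert a s h ih => simp [Finset.sum_insert h, circ_add, ih]

/-- Increment the first entry of a list by 1. -/
def inc1 : List ℕ+ → List ℕ+
  | [] => []
  | h :: t => (1 + h) :: t

/-- Compositions of `k` as lists of positive integers. -/
def compF : ℕ → Finset (List ℕ+)
  | 0 => {[]}
  | k + 1 =>
      ((compF k).image (fun l => (1 : ℕ+) :: l)) ∪
        (((compF k).filter (fun l => l ≠ [])).image inc1)

lemma mem_compF {k : ℕ} {l : List ℕ+} :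
    l ∈ compF k ↔ (l.map (fun n : ℕ+ => (n : ℕ))).sum = k := by
  induction k generalizing l with
  | zero =>
    simp only [compF, Finset.mem_singleton]
    constructor
    · rintro rfl; rfl
    · intro h
      cases l with
      | nil => rfl
      | cons a t => exact absurd h (by simp [a.pos.ne'])
  | succ n ih =>
    simp only [compF, Finset.mem_union, Finset.mem_image, Finset.mem_filter]
    constructor
    · rintro (⟨a, ha, rfl⟩ | ⟨a, ⟨ha, hne⟩, rfl⟩)
      · simp only [List.map_cons, List.sum_cons, PNat.one_coe, ih.mp ha]
        omega
      · cases a with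
        | nil => exact absurd rfl hne
        | cons h t =>
          have := ih.mp ha
          simp only [List.map_cons, List.sum_cons] at this ⊢
          simp only [inc1, List.map_cons, List.sum_cons, PNat.add_coe, PNat.one_coe]
          omega
    · intro h
      cases l with
      | nil => simp at h
      | cons a t =>
        by_cases ha : a = 1
        · subst ha
          left
          refine ⟨t, ih.mpr ?_, rfl⟩
          simp at h; omega
        · right
          have h2 : 1 < a := lt_of_le_of_ne a.one_le (Ne.symm ha)
          refine ⟨(a - 1) :: t, ⟨ih.mpr ?_, by simp⟩, ?_⟩
          · have h5 : ((a - 1 : ℕ+) : ℕ) = (a : ℕ) - 1 := by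
              rw [PNat.sub_coe, if_pos h2, PNat.one_coe]
            simp only [List.map_cons, List.sum_cons, h5] at h ⊢
            have h4 : 1 < (a : ℕ) := h2
            omega
          · show ((1 + (a - 1)) :: t) = a :: t
            congr 1
            exact PNat.add_sub_of_lt h2
lemma Dk_succ (k : ℕ) :
    (∑ l ∈ compF (k + 1), (MonoidAlgebra.single (FreeMonoid.ofList l) 1 : DXi)) =
      xiX 1 * (∑ l ∈ compF k, MonoidAlgebra.single (FreeMonoid.ofList l) 1) +
        circ 1 (∑ l ∈ compF k, MonoidAlgebra.single (FreeMonoid.ofList l) 1) := by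
  classical
  have hdisj : Disjoint ((compF k).image (fun l => (1 : ℕ+) :: l))
      (((compF k).filter (fun l => l ≠ [])).image inc1) := by
    rw [Finset.disjoint_left]
    rintro x hx hy
    obtain ⟨a, _, rfl⟩ := Finset.mem_image.mp hx
    obtain ⟨b, hb, hba⟩ := Finset.mem_image.mp hy
    cases b with
    | nil => exact (Finset.mem_filter.mp hb).2 rfl
    | cons h t =>
      have e1 : (1 : ℕ+) = 1 + h := (List.cons.injEq _ _ _ _ ▸ hba.symm).1
      have e2 : (1 : ℕ) = 1 + (h : ℕ) := congrArg PNat.val e1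
      have e3 : 0 < (h : ℕ) := h.pos
      omega
  rw [compF, Finset.sum_union hdisj,
    Finset.sum_image (fun a _ b _ h => by injection h),
    Finset.sum_image ?hinj]
  case hinj =>
    rintro a ha b hb h
    have ha' := (Finset.mem_filter.mp ha).2
    have hb' := (Finset.mem_filter.mp hb).2
    cases a with
    | nil => exact absurd rfl ha'
    | cons x s =>
      cases b with
      | nil => exact absurd rfl hb'
      | cons y t =>
        simp only [inc1, List.cons.injEq] at h
        exact by simp [h.2, add_left_cancel h.1]
  rw [Finset.mul_sum, circ_sum]
  congr 1
  · exact Finset.sum_congr rfl fun l _ => by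
      rw [xiX_eq_word, word_mul]; rfl
  · rw [← Finset.sum_filter_of_ne (p := fun l => l ≠ []) (f := fun l =>
        circ 1 (MonoidAlgebra.single (FreeMonoid.ofList l) 1)) ?_]
    · refine Finset.sum_congr rfl fun l hl => ?_
      have hl' := (Finset.mem_filter.mp hl).2
      cases l with
      | nil => exact absurd rfl hl'
      | cons h t => rw [circ_single]; rfl
    · intro x _ hx
      rintro rfl
      refine hx ?_
      show circ 1 (MonoidAlgebra.single (FreeMonoid.ofList []) 1) = 0
      rw [circ_single]; rfl

lemma dW_replicate (k : ℕ) :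
    dW (List.replicate k 1) =
      ∑ l ∈ compF k, MonoidAlgebra.single (FreeMonoid.ofList l) 1 := by
  induction k with
  | zero => simp [dW, compF, one_eq_word]
  | succ n ih =>
    rw [List.replicate_succ, show dW ((1 : ℕ+) :: List.replicate n 1) =
      xiX 1 * dW (List.replicate n 1) + circ 1 (dW (List.replicate n 1)) from rfl,
      ih, Dk_succ]
lemma prod_map_xiOf (l : List ℕ+) :
    (l.map (fun n : ℕ+ => xiOf (n : ℕ))).prod =
      MonoidAlgebra.single (FreeMonoid.ofList l) 1 := by
  induction l with
  | nil => simp [one_eq_word]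
  | cons h t ih =>
    rw [List.map_cons, List.prod_cons, ih]
    have hx : xiOf (h : ℕ) = xiX h := by
      rw [xiOf, dif_pos h.pos]
      congr 1
    rw [hx, xiX_eq_word, word_mul]
    rfl

lemma sum_coe_fin (l : List ℕ+) :
    ∑ j : Fin l.length, ((l.get j : ℕ+) : ℕ) = (l.map (fun n : ℕ+ => (n : ℕ))).sum := by
  rw [← List.sum_ofFn]
  congr 1
  conv_rhs => rw [← List.ofFn_get l]
  rw [List.map_ofFn]
  rfl
lemma mem_Ifin {r n : ℕ} {c : Fin r → ℕ} :
    c ∈ Ifin r n ↔ (∀ j, 1 ≤ c j ∧ c j ≤ n) ∧ ∑ j, c j = n := by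
  simp [Ifin, Fintype.mem_piFinset, Finset.mem_filter]

theorem d_xi_pow_aux (k : ℕ) (hk : 1 ≤ k) :
    dmap (xiX 1 ^ k) =
      ∑ r ∈ Finset.Icc 1 k, ∑ c ∈ Ifin r k, (List.ofFn fun j : Fin r => xiOf (c j)).prod := by
  classical
  rw [xiX_one_pow, dmap_single, dW_replicate]
  have hone : ∀ l : List ℕ+, ∀ i ∈ l.map (fun n : ℕ+ => (n : ℕ)), 1 ≤ i := by
    intro l i hi
    obtain ⟨n, _, rfl⟩ := List.mem_map.mp hi
    exact n.one_le
  have hmaps : ∀ l ∈ compF k, l.length ∈ Finset.Icc 1 k := by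
    intro l hl
    have hsum := mem_compF.mp hl
    rw [Finset.mem_Icc]
    refine ⟨?_, ?_⟩
    · rcases l with _ | ⟨a, t⟩
      · simp at hsum; omega
      · simp
    · calc l.length = (l.map (fun n : ℕ+ => (n : ℕ))).length := (List.length_map _).symm
        _ ≤ (l.map (fun n : ℕ+ => (n : ℕ))).sum := List.length_le_sum_of_one_le _ (hone l)
        _ = k := hsum
  rw [← Finset.sum_fiberwise_of_maps_to hmaps]
  refine Finset.sum_congr rfl fun r hr => ?_
  refine Finset.sum_nbij' (i := fun l => fun j : Fin r => ((l.getD j 1 : ℕ+) : ℕ))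
    (j := fun c => (List.ofFn c).map Nat.toPNat') ?_ ?_ ?_ ?_ ?_
  · -- hi
    intro l hl
    obtain ⟨hl1, hlen⟩ := Finset.mem_filter.mp hl
    subst hlen
    have hsum := mem_compF.mp hl1
    rw [mem_Ifin]
    have hget : ∀ j : Fin l.length, l.getD (j : ℕ) 1 = l.get j := fun j => by
      rw [List.getD_eq_getElem l 1 j.isLt]; rfl
    constructor
    · intro j
      show 1 ≤ ((l.getD (j : ℕ) 1 : ℕ+) : ℕ) ∧ ((l.getD (j : ℕ) 1 : ℕ+) : ℕ) ≤ k
      rw [hget]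
      refine ⟨(l.get j).one_le, ?_⟩
      calc ((l.get j : ℕ+) : ℕ) ≤ ∑ j' : Fin l.length, ((l.get j' : ℕ+) : ℕ) :=
            Finset.single_le_sum (f := fun j' : Fin l.length => ((l.get j' : ℕ+) : ℕ)) (fun _ _ => Nat.zero_le _) (Finset.mem_univ j)
        _ = k := by rw [sum_coe_fin, hsum]
    · show ∑ j : Fin l.length, ((l.getD (j : ℕ) 1 : ℕ+) : ℕ) = k
      simp_rw [hget]
      rw [sum_coe_fin, hsum]
  · -- hj
    intro c hc
    obtain ⟨hc1, hc2⟩ := mem_Ifin.mp hc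
    rw [Finset.mem_filter]
    constructor
    · rw [mem_compF, List.map_map]
      have : ((fun n : ℕ+ => (n : ℕ)) ∘ Nat.toPNat') ∘ c = c := by
        funext j
        simp only [Function.comp_apply]
        exact PNat.toPNat'_coe ((hc1 j).1)
      rw [List.map_ofFn, this, List.sum_ofFn, hc2]
    · simp
  · -- left_inv
    intro l hl
    obtain ⟨hl1, hlen⟩ := Finset.mem_filter.mp hl
    subst hlen
    apply List.ext_getElem
    · simp
    · intro n h1 h2
      simp only [List.getElem_map, List.getElem_ofFn]
      rw [List.getD_eq_getElem l 1 (by simpa using h2)]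
      exact PNat.coe_toPNat' _
  · -- right_inv
    intro c hc
    obtain ⟨hc1, hc2⟩ := mem_Ifin.mp hc
    funext j
    show ((((List.ofFn c).map Nat.toPNat').getD (j : ℕ) 1 : ℕ+) : ℕ) = c j
    have hlen : ((List.ofFn c).map Nat.toPNat').length = r := by simp
    rw [List.getD_eq_getElem _ 1 (by rw [hlen]; exact j.isLt)]
    simp only [List.getElem_map, List.getElem_ofFn]
    rw [PNat.toPNat'_coe ((hc1 j).1)]
  · -- values
    intro l hl
    obtain ⟨hl1, hlen⟩ := Finset.mem_filter.mp hl
    subst hlen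
    have : (List.ofFn fun j : Fin l.length => xiOf ((l.getD (j : ℕ) 1 : ℕ+) : ℕ)) =
        l.map (fun n : ℕ+ => xiOf (n : ℕ)) := by
      conv_rhs => rw [← List.ofFn_get l, List.map_ofFn]
      congr 1
      funext j
      rw [List.getD_eq_getElem l 1 j.isLt]
      rfl
    rw [this, prod_map_xiOf]

/-- For every integer `k ≥ 1`, `d(ξ_1^k) = Σ_{r=1}^{k} Σ_{c ∈ I(r,k)} ξ_{c_1} ⋯ ξ_{c_r}`. -/
theorem d_xi_pow (k : ℕ) (hk : 1 ≤ k) :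
    dmap (xiX 1 ^ k) =
      ∑ r ∈ Finset.Icc 1 k, ∑ c ∈ Ifin r k, (List.ofFn fun j : Fin r => xiOf (c j)).prod := by
  exact d_xi_pow_aux k hk

end
end
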